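/- arXiv:0909.5648 — 4 statements merged into one kernel-verified Lean document; each statement's English description precedes it below -/
import Mathlib

section
/- Let p be an odd prime and let a be a positive integer. Then ∑_{k=0}^{p^a-1} binom(2k,k)/2^k ≡ (-1)^{(p^a-1)/2} (mod p²) and ∑_{k=1}^{p^a-1} binom(2k,k+1)/2^k ≡ 1 - 2^{p-1} (mod p²). -/
open Finset

section Aux

variable {p : ℕ}



lemma chi_mul {α : Type*} [Monoid α] [HasDistribNeg α] {x z : ℕ} (hx : Odd x) (hz : Odd z) :
    (-1:α)^((x*z-1)/2) = (-1)^((x-1)/2) * (-1)^((z-1)/2) := by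
  obtain ⟨c, hc⟩ := hx
  obtain ⟨d, hd⟩ := hz
  have hxz : x*z = 4*(c*d)+2*c+2*d+1 := by rw [hc, hd]; ring
  have h1 : (x*z-1)/2 = 2*(c*d)+c+d := by omega
  have h2 : (x-1)/2 = c := by omega
  have h3 : (z-1)/2 = d := by omega
  rw [h1, h2, h3, pow_add, pow_add, pow_mul, neg_one_sq, one_pow, one_mul]

lemma chi_pow {α : Type*} [Monoid α] [HasDistribNeg α] (hodd : Odd p) :
    ∀ (b : ℕ) {u : ℕ}, Odd u →
      (-1:α)^((p^b*u-1)/2) = ((-1:α)^((p-1)/2))^b * (-1)^((u-1)/2) := by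
  intro b
  induction b with
  | zero => intro u hu; simp
  | succ b ih =>
    intro u hu
    have h1 : p^(b+1)*u = p*(p^b*u) := by ring
    rw [h1, chi_mul hodd (hodd.pow.mul hu), ih hu, ← mul_assoc, ← pow_succ']

lemma neg_one_pow_sub {α : Type*} [Monoid α] [HasDistribNeg α] {v w : ℕ} (h : v ≤ w) :
    (-1:α)^(w-v) = (-1)^w * (-1)^v := by
  have h1 : (-1:α)^(w-v) * (-1)^v = (-1)^w := by
    rw [← pow_add]
    congr 1
    omega
  have h2 : ((-1:α)^v) * ((-1:α)^v) = 1 := by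
    rw [← pow_add, ← two_mul, pow_mul, neg_one_sq, one_pow]
  calc (-1:α)^(w-v) = (-1:α)^(w-v) * (((-1:α)^v) * ((-1:α)^v)) := by rw [h2, mul_one]
    _ = ((-1:α)^(w-v) * (-1:α)^v) * (-1:α)^v := by rw [mul_assoc]
    _ = (-1)^w * (-1)^v := by rw [h1]


-- two-step Pascal
lemma pascal2 (N s : ℕ) : (N+2).choose (s+2) = N.choose s + 2 * N.choose (s+1) + N.choose (s+2) := by
  rw [Nat.choose_succ_succ (N+1) (s+1), Nat.choose_succ_succ N s, Nat.choose_succ_succ N (s+1)]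
  ring

-- A-recurrence
lemma A_rec (n : ℕ) :
    (∑ i ∈ range (n+1), (-1:ℤ)^i * ((2*n+2).choose (n+2+2*i) : ℤ)) =
    2 * (∑ i ∈ range n, (-1:ℤ)^i * ((2*n).choose (n+1+2*i) : ℤ)) + (2*n).choose n := by
  have key : ∀ i, ((2*n+2).choose (n+2+2*i) : ℤ) =
      ((2*n).choose (n+2*i) : ℤ) + 2 * (2*n).choose (n+1+2*i) + (2*n).choose (n+2+2*i) := by
    intro i
    have := pascal2 (2*n) (n + 2*i)
    have h1 : n + 2*i + 1 = n+1+2*i := by ring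
    have h2 : n + 2*i + 2 = n+2+2*i := by ring
    rw [h1, h2] at this
    exact_mod_cast this
  calc (∑ i ∈ range (n+1), (-1:ℤ)^i * ((2*n+2).choose (n+2+2*i) : ℤ))
      = ∑ i ∈ range (n+1), ((-1:ℤ)^i * (2*n).choose (n+2*i)
          + 2 * ((-1:ℤ)^i * (2*n).choose (n+1+2*i))
          + (-1:ℤ)^i * (2*n).choose (n+2+2*i)) := by
        refine Finset.sum_congr rfl fun i _ => ?_
        rw [key i]; ring
    _ = (∑ i ∈ range (n+1), (-1:ℤ)^i * (2*n).choose (n+2*i))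
        + 2 * (∑ i ∈ range (n+1), (-1:ℤ)^i * (2*n).choose (n+1+2*i))
        + (∑ i ∈ range (n+1), (-1:ℤ)^i * (2*n).choose (n+2+2*i)) := by
        rw [Finset.sum_add_distrib, Finset.sum_add_distrib, Finset.mul_sum]
    _ = 2 * (∑ i ∈ range n, (-1:ℤ)^i * ((2*n).choose (n+1+2*i) : ℤ)) + (2*n).choose n := by
        have hmid : (∑ i ∈ range (n+1), (-1:ℤ)^i * (2*n).choose (n+1+2*i))
            = ∑ i ∈ range n, (-1:ℤ)^i * (2*n).choose (n+1+2*i) := by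
          rw [Finset.sum_range_succ]
          have : (2*n).choose (n+1+2*n) = 0 := Nat.choose_eq_zero_of_lt (by omega)
          simp [this]
        have htel : (∑ i ∈ range (n+1), (-1:ℤ)^i * (2*n).choose (n+2*i))
            + (∑ i ∈ range (n+1), (-1:ℤ)^i * (2*n).choose (n+2+2*i)) = (2*n).choose n := by
          have hshift : (∑ i ∈ range (n+1), (-1:ℤ)^i * (2*n).choose (n+2+2*i))
              = - ∑ i ∈ range (n+1), (-1:ℤ)^(i+1) * (2*n).choose (n+2*(i+1)) := by
            rw [← Finset.sum_neg_distrib]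
            refine Finset.sum_congr rfl fun i _ => ?_
            have : n + 2*(i+1) = n+2+2*i := by ring
            rw [this]; ring
          rw [hshift]
          have := Finset.sum_range_succ' (fun i => (-1:ℤ)^i * (2*n).choose (n+2*i)) (n+1)
          -- sum_{i<n+2} f i = sum_{i<n+1} f (i+1) + f 0
          have hlast : (∑ i ∈ range (n+2), (-1:ℤ)^i * (2*n).choose (n+2*i))
              = (∑ i ∈ range (n+1), (-1:ℤ)^i * (2*n).choose (n+2*i))
                + (-1:ℤ)^(n+1) * (2*n).choose (n+2*(n+1)) := Finset.sum_range_succ _ _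
          have hz : (2*n).choose (n+2*(n+1)) = 0 := Nat.choose_eq_zero_of_lt (by omega)
          rw [hz] at hlast
          simp only [Nat.cast_zero, mul_zero, add_zero] at hlast
          rw [this] at hlast
          have h0 : (-1:ℤ)^0 * (2*n).choose (n+2*0) = (2*n).choose n := by norm_num
          rw [h0] at hlast
          linarith
        rw [hmid] at *
        linarith



-- identity 1 : sum_{k<n} 2^(n-1-k) C(2k,k) = A(n)
lemma ident1 (n : ℕ) :
    (∑ k ∈ range n, (2:ℤ)^(n-1-k) * ((2*k).choose k : ℤ)) =
    ∑ i ∈ range n, (-1:ℤ)^i * ((2*n).choose (n+1+2*i) : ℤ) := by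
  induction n with
  | zero => simp
  | succ n ih =>
    have hL : (∑ k ∈ range (n+1), (2:ℤ)^(n+1-1-k) * ((2*k).choose k : ℤ))
        = 2 * (∑ k ∈ range n, (2:ℤ)^(n-1-k) * ((2*k).choose k : ℤ)) + (2*n).choose n := by
      rw [Finset.sum_range_succ, Finset.mul_sum]
      have h1 : (2:ℤ)^(n+1-1-n) * ((2*n).choose n : ℤ) = (2*n).choose n := by
        simp
      rw [h1]
      congr 1
      refine Finset.sum_congr rfl fun k hk => ?_
      have hk' : k < n := Finset.mem_range.mp hk
      have : n + 1 - 1 - k = (n - 1 - k) + 1 := by omega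
      rw [this, pow_succ]
      ring
    rw [hL, ih]
    have := A_rec n
    rw [← this]
    refine Finset.sum_congr rfl fun i _ => ?_
    have h2 : 2*(n+1) = 2*n+2 := by ring
    have h3 : n+1+1+2*i = n+2+2*i := by ring
    rw [h2, h3]

-- identity 2 : sum_{k<m+1} 2^(m-k) C(2k,k+1) = C(2m+1, m+1) - 2^m
lemma ident2 (m : ℕ) :
    (∑ k ∈ range (m+1), (2:ℤ)^(m-k) * ((2*k).choose (k+1) : ℤ)) =
    ((2*m+1).choose (m+1) : ℤ) - 2^m := by
  induction m with
  | zero => simp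
  | succ m ih =>
    rw [Finset.sum_range_succ]
    have hsplit : (∑ k ∈ range (m+1), (2:ℤ)^(m+1-k) * ((2*k).choose (k+1) : ℤ))
        = 2 * ∑ k ∈ range (m+1), (2:ℤ)^(m-k) * ((2*k).choose (k+1) : ℤ) := by
      rw [Finset.mul_sum]
      refine Finset.sum_congr rfl fun k hk => ?_
      have hk' : k < m+1 := Finset.mem_range.mp hk
      have : m + 1 - k = (m - k) + 1 := by omega
      rw [this, pow_succ]; ring
    rw [hsplit, ih]
    -- goal: 2*(C(2m+1,m+1) - 2^m) + C(2(m+1), m+2) = C(2m+3, m+2) - 2^(m+1)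
    have hkey : ((2*m+3).choose (m+2) : ℤ) = 2 * (2*m+1).choose (m+1) + (2*m+2).choose (m+2) := by
      have hp : (2*m+3).choose (m+2) = (2*m+2).choose (m+1) + (2*m+2).choose (m+2) := by
        have := Nat.choose_succ_succ (2*m+2) (m+1)
        simpa using this
      have hd : (2*m+2).choose (m+1) = 2 * (2*m+1).choose (m+1) := by
        have h1 : (2*m+2).choose (m+1) = (2*m+1).choose m + (2*m+1).choose (m+1) := by
          rw [show 2*m+2 = (2*m+1)+1 by ring]
          exact Nat.choose_succ_succ _ _
        have h2 : (2*m+1).choose m = (2*m+1).choose (m+1) := by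
          have := Nat.choose_symm (n := 2*m+1) (k := m+1) (by omega)
          simpa [show 2*m+1-(m+1) = m by omega] using this
        rw [h2] at h1
        omega
      push_cast [hp, hd]
      ring
    have h2 : 2*(m+1) = 2*m+2 := by ring
    rw [h2, hkey]
    have hmm : m - m = 0 := by omega
    push_cast [hmm]
    ring



lemma md_mod (hp1 : 0 < p) (d c : ℕ) (hc : c < p) : (p*d + c) % p = c := by
  rw [Nat.mul_add_mod]
  exact Nat.mod_eq_of_lt hc

lemma md_div (hp1 : 0 < p) (d c : ℕ) (hc : c < p) : (p*d + c) / p = d := by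
  rw [Nat.mul_add_div hp1, Nat.div_eq_of_lt hc, add_zero]

-- (S4)
lemma choose_p_sub_one (hp : p.Prime) : ∀ k, k ≤ p - 1 → (((p-1).choose k : ZMod p)) = (-1)^k := by
  have hp1 : 1 < p := hp.one_lt
  intro k
  induction k with
  | zero => simp
  | succ k ih =>
    intro hk
    have ihk := ih (by omega)
    have hpas : (p-1).choose k + (p-1).choose (k+1) = p.choose (k+1) := by
      rw [show p = (p-1)+1 by omega]
      exact (Nat.choose_succ_succ _ _).symm
    have hdvd : p ∣ p.choose (k+1) := hp.dvd_choose_self (by omega) (by omega)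
    have hz : ((p.choose (k+1) : ZMod p)) = 0 := (ZMod.natCast_eq_zero_iff _ _).mpr hdvd
    have hsum : ((p-1).choose k : ZMod p) + ((p-1).choose (k+1) : ZMod p) = 0 := by
      rw [← Nat.cast_add, hpas, hz]
    rw [ihk] at hsum
    rw [eq_neg_of_add_eq_zero_right hsum]
    ring

-- Lucas chain
lemma lucas_chain (hp : p.Prime) :
    ∀ b u, Odd u → 0 < u → u < p →
      ((2*p^(b+1) - 1).choose (p^b*(p+u) - 1) : ZMod p) = 1 := by
  have hp1 : 1 < p := hp.one_lt
  haveI : Fact p.Prime := ⟨hp⟩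
  intro b
  induction b with
  | zero =>
    intro u hu hu0 hup
    have key := Choose.choose_modEq_choose_mod_mul_choose_div_nat
      (n := 2*p^(0+1) - 1) (k := p^0*(p+u) - 1) (p := p)
    have e1 : 2*p^(0+1) - 1 = p*1 + (p-1) := by
      simp only [zero_add, pow_one]; omega
    have e2 : p^0*(p+u) - 1 = p*1 + (u-1) := by
      simp only [pow_zero, one_mul]; omega
    rw [e1, e2, md_mod (by omega) _ _ (by omega), md_div (by omega) _ _ (by omega),
      md_mod (by omega) _ _ (by omega), md_div (by omega) _ _ (by omega)] at key
    rw [e1, e2, (ZMod.natCast_eq_natCast_iff _ _ _).mpr key]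
    push_cast
    rw [Nat.choose_one_right, choose_p_sub_one hp (u-1) (by omega)]
    have hev : Even (u-1) := by
      rcases hu with ⟨c, hc⟩; exact ⟨c, by omega⟩
    rw [hev.neg_one_pow]
    push_cast
    ring
  | succ b ih =>
    intro u hu hu0 hup
    have hppos : 0 < p^(b+1) := pow_pos (by omega) _
    have hpbpos : 0 < p^b := pow_pos (by omega) _
    have key := Choose.choose_modEq_choose_mod_mul_choose_div_nat
      (n := 2*p^(b+1+1) - 1) (k := p^(b+1)*(p+u) - 1) (p := p)
    have e1 : 2*p^(b+1+1) - 1 = p*(2*p^(b+1) - 1) + (p-1) := by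
      have h1 : 1 ≤ p^(b+1) := hppos
      have h2 : p^(b+1+1) = p * p^(b+1) := by ring
      zify [show (1:ℕ) ≤ 2*p^(b+1+1) by nlinarith, show (1:ℕ) ≤ 2*p^(b+1) by omega,
        show (1:ℕ) ≤ p by omega]
      push_cast [h2]
      ring
    have hX : p^(b+1)*(p+u) = p * (p^b*(p+u)) := by rw [pow_succ]; ring
    have h1' : 1 ≤ p^b*(p+u) := Nat.one_le_iff_ne_zero.mpr (by positivity)
    have e2 : p^(b+1)*(p+u) - 1 = p*(p^b*(p+u) - 1) + (p-1) := by
      rw [hX]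
      zify [h1', show (1:ℕ) ≤ p*(p^b*(p+u)) from le_trans h1' (Nat.le_mul_of_pos_left _ (by omega)),
        show (1:ℕ) ≤ p by omega]
      ring
    rw [e1, e2, md_mod (by omega) _ _ (by omega), md_div (by omega) _ _ (by omega),
      md_mod (by omega) _ _ (by omega), md_div (by omega) _ _ (by omega)] at key
    rw [e1, e2, (ZMod.natCast_eq_natCast_iff _ _ _).mpr key, Nat.choose_self]
    push_cast
    simpa using ih u hu hu0 hup




-- K1 : ℕ identity
lemma K1 (n j : ℕ) (hn : 0 < n) (hj : 0 < j) :
    (n+j) * (2*n).choose (n+j) = (2*n) * (2*n-1).choose (n+j-1) := by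
  have h := Nat.add_one_mul_choose_eq (2*n-1) (n+j-1)
  have h1 : 2*n-1+1 = 2*n := by omega
  have h2 : n+j-1+1 = n+j := by omega
  rw [h1, h2] at h
  rw [mul_comm]
  exact h.symm

lemma unit_of_not_dvd (hp : p.Prime) {w : ℕ} (hw : ¬ p ∣ w) : IsUnit ((w : ZMod (p^2))) := by
  rw [ZMod.isUnit_iff_coprime]
  exact Nat.Coprime.pow_right 2 ((hp.coprime_iff_not_dvd.mpr hw).symm)

-- K2 : vanishing terms
lemma K2 (hp : p.Prime) {a : ℕ} (ha : 0 < a) {j : ℕ} (hj0 : 0 < j) (hjn : j < p^a)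
    (hnd : ¬ p^(a-1) ∣ j) :
    (((2*p^a).choose (p^a + j) : ZMod (p^2))) = 0 := by
  have hp1 : 1 < p := hp.one_lt
  have hjne : j ≠ 0 := by omega
  have hble : j.factorization p ≤ a - 2 := by
    by_contra hcon
    push_neg at hcon
    exact hnd ((hp.pow_dvd_iff_le_factorization hjne).mpr (by omega))
  set b := j.factorization p with hbdef
  have hab : 2 ≤ a - b := by
    rcases Nat.eq_or_lt_of_le ha with h1 | h1
    · -- a = 1 : then a - 1 = 0, p^0 = 1 ∣ j, contradiction
      exfalso
      exact hnd (by rw [← h1]; simpa using Dvd.intro j rfl)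
    · omega
  set j' := j / p^b with hj'def
  have hj'dvd : p^b * j' = j := Nat.ordProj_mul_ordCompl_eq_self j p
  have hj'nd : ¬ p ∣ j' := Nat.not_dvd_ordCompl hp hjne
  have hsplit : p^a + j = p^b * (p^(a-b) + j') := by
    have hpa : p^a = p^b * p^(a-b) := by
      rw [← pow_add]
      congr 1
      omega
    rw [Nat.mul_add, hj'dvd, ← hpa]
  have hw : ¬ p ∣ (p^(a-b) + j') := by
    intro hd
    have hdp : p ∣ p^(a-b) := dvd_pow_self p (by omega)
    exact hj'nd ((Nat.dvd_add_right hdp).mp hd)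
  set C := (2*p^a).choose (p^a + j) with hCdef
  set C' := (2*p^a - 1).choose (p^a + j - 1) with hC'def
  have hkey : (p^a + j) * C = (2*p^a) * C' := K1 (p^a) j (pow_pos (by omega) _) hj0
  rw [hsplit] at hkey
  have h2pa : 2*p^a = p^b * (2*p^(a-b)) := by
    have hpa : p^a = p^b * p^(a-b) := by
      rw [← pow_add]; congr 1; omega
    rw [hpa]; ring
  rw [h2pa] at hkey
  rw [mul_assoc, mul_assoc] at hkey
  have hcancel := Nat.eq_of_mul_eq_mul_left (pow_pos (by omega : 0 < p) b) hkey
  -- cast to ZMod p^2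
  have hcst := congrArg (Nat.cast : ℕ → ZMod (p^2)) hcancel
  push_cast at hcst
  have hzero : ((p:ZMod (p^2)))^(a-b) = 0 := by
    have hd : (p:ℕ)^2 ∣ p^(a-b) := pow_dvd_pow p hab
    rw [← Nat.cast_pow, ZMod.natCast_eq_zero_iff]
    exact hd
  rw [hzero] at hcst
  simp only [zero_add, add_zero, mul_zero, zero_mul] at hcst
  exact ((unit_of_not_dvd hp hj'nd).mul_right_eq_zero).mp hcst

-- K3 : main surviving terms
lemma K3 (hp : p.Prime) {a : ℕ} (ha : 0 < a) {u : ℕ} (hu : Odd u)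
    (hu0 : 0 < u) (hup : u < p) :
    ((p+u : ℕ) : ZMod (p^2)) * ((2*p^a).choose (p^a + p^(a-1)*u) : ZMod (p^2)) = 2*p := by
  have hp1 : 1 < p := hp.one_lt
  set j := p^(a-1)*u with hjdef
  have hj0 : 0 < j := by positivity
  set C := (2*p^a).choose (p^a + j) with hCdef
  set C' := (2*p^a - 1).choose (p^a + j - 1) with hC'def
  have hkey : (p^a + j) * C = (2*p^a) * C' := K1 (p^a) j (pow_pos (by omega) _) hj0
  have hpa : p^a = p^(a-1) * p := by
    rw [← pow_succ]; congr 1; omega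
  have hsplit : p^a + j = p^(a-1) * (p+u) := by
    rw [hpa, hjdef]; ring
  have h2pa : 2*p^a = p^(a-1) * (2*p) := by rw [hpa]; ring
  rw [hsplit, h2pa, mul_assoc, mul_assoc] at hkey
  have hcancel := Nat.eq_of_mul_eq_mul_left (pow_pos (by omega : 0 < p) (a-1)) hkey
  -- C' ≡ 1 mod p via lucas chain
  have hluc : ((C' : ZMod p)) = 1 := by
    have ha' : a = (a-1)+1 := by omega
    have h1 : 2*p^a - 1 = 2*p^((a-1)+1) - 1 := by rw [← ha']
    have h2 : p^a + j - 1 = p^(a-1)*(p+u) - 1 := by rw [hsplit]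
    rw [hC'def, h1, h2]
    exact lucas_chain hp (a-1) u hu hu0 hup
  have hC'mod : C' % p = 1 := by
    have hmod' : (C' : ZMod p) = ((1:ℕ) : ZMod p) := by rw [hluc]; norm_num
    have := (ZMod.natCast_eq_natCast_iff _ _ _).mp hmod'
    have h1 : 1 % p = 1 := Nat.mod_eq_of_lt hp1
    unfold Nat.ModEq at this
    omega
  have hC'split : C' = 1 + p * (C' / p) := by
    have := Nat.mod_add_div C' p
    omega
  rw [hC'split] at hcancel
  have hcast := congrArg (Nat.cast : ℕ → ZMod (p^2)) hcancel
  push_cast at hcast ⊢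
  rw [hcast]
  have hsq : ((p:ZMod (p^2)))^2 = 0 := by
    rw [← Nat.cast_pow, ZMod.natCast_self]
  ring_nf
  rw [hsq]
  ring



lemma wolsten (hp : p.Prime) (hp2 : p ≠ 2) {a : ℕ} (ha : 0 < a) :
    (((2*p^a - 1).choose (p^a - 1) : ZMod (p^2))) = 1 := by
  have hp1 : 1 < p := hp.one_lt
  set n := p^a with hndef
  have hn1 : 1 < n := Nat.one_lt_pow (by omega) (by omega)
  have hnodd : Odd n := Odd.pow (hp.odd_of_ne_two hp2)
  set y := (n-1)/2 with hydef
  have hy : n = 2*y + 1 := by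
    rcases hnodd with ⟨c, hc⟩; omega
  -- step 1-3 : C * (n-1)! = P
  set C := (2*n - 1).choose (n - 1) with hCdef
  have h1 : C * (n-1).factorial * n.factorial = (2*n-1).factorial := by
    have := Nat.choose_mul_factorial_mul_factorial (n := 2*n-1) (k := n-1) (by omega)
    rw [show 2*n-1-(n-1) = n by omega] at this
    exact this
  have h2 : (2*n-1).factorial = n.factorial * ∏ i ∈ Ico (n+1) (2*n), i := by
    have ha1 : (2*n-1).factorial = ∏ i ∈ Ico 1 (2*n), i := by
      rw [show 2*n = (2*n-1)+1 by omega]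
      exact (prod_Ico_id_eq_factorial _).symm
    have ha2 : n.factorial = ∏ i ∈ Ico 1 (n+1), i := (prod_Ico_id_eq_factorial _).symm
    rw [ha1, ha2, prod_Ico_consecutive _ (by omega : 1 ≤ n+1) (by omega : n+1 ≤ 2*n)]
  have h3 : C * (n-1).factorial = ∏ i ∈ Ico (n+1) (2*n), i := by
    have hfpos : 0 < n.factorial := Nat.factorial_pos n
    have := h1.trans h2
    rw [mul_comm (n.factorial) _] at this
    exact Nat.eq_of_mul_eq_mul_right hfpos this
  -- step 4-5 : pairing
  have h4 : (n-1).factorial = ∏ i ∈ Ico 1 (y+1), (i*(n-i)) := by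
    have ha1 : (n-1).factorial = ∏ i ∈ Ico 1 n, i := by
      rw [show n = (n-1)+1 by omega]
      exact (prod_Ico_id_eq_factorial _).symm
    rw [ha1, ← prod_Ico_consecutive (fun i => i) (by omega : 1 ≤ y+1) (by omega : y+1 ≤ n)]
    rw [Finset.prod_mul_distrib]
    congr 1
    refine (Finset.prod_nbij' (fun i => n - i) (fun i => n - i) ?_ ?_ ?_ ?_ ?_).symm
    · intro i hi; simp only [mem_Ico] at *; omega
    · intro i hi; simp only [mem_Ico] at *; omega
    · intro i hi; simp only [mem_Ico] at *; omega
    · intro i hi; simp only [mem_Ico] at *; omega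
    · intro i hi; rfl
  have h5 : (∏ i ∈ Ico (n+1) (2*n), i) = ∏ i ∈ Ico 1 (y+1), ((n+i)*(2*n-i)) := by
    rw [← prod_Ico_consecutive (fun i => i) (by omega : n+1 ≤ n+y+1) (by omega : n+y+1 ≤ 2*n)]
    rw [Finset.prod_mul_distrib]
    congr 1
    · -- ∏_{Ico (n+1) (n+y+1)} i = ∏_{Ico 1 (y+1)} (n+i)
      refine (Finset.prod_nbij' (fun i => n + i) (fun i => i - n) ?_ ?_ ?_ ?_ ?_).symm
      · intro i hi; simp only [mem_Ico] at *; omega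
      · intro i hi; simp only [mem_Ico] at *; omega
      · intro i hi; simp only [mem_Ico] at *; omega
      · intro i hi; simp only [mem_Ico] at *; omega
      · intro i hi; rfl
    · -- ∏_{Ico (n+y+1) (2n)} i = ∏_{Ico 1 (y+1)} (2n-i)
      refine (Finset.prod_nbij' (fun i => 2*n - i) (fun i => 2*n - i) ?_ ?_ ?_ ?_ ?_).symm
      · intro i hi; simp only [mem_Ico] at *; omega
      · intro i hi; simp only [mem_Ico] at *; omega
      · intro i hi; simp only [mem_Ico] at *; omega
      · intro i hi; simp only [mem_Ico] at *; omega
      · intro i hi; rfl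
  have h6 : C * ∏ i ∈ Ico 1 (y+1), (i*(n-i)) = ∏ i ∈ Ico 1 (y+1), ((n+i)*(2*n-i)) := by
    rw [← h4, ← h5, h3]
  -- p-power extraction
  set S := Ico 1 (y+1) with hSdef
  set B : ℕ → ℕ := fun i => i.factorization p with hBdef
  set I' : ℕ → ℕ := fun i => i / p^(B i) with hI'def
  set d : ℕ → ℕ := fun i => I' i * (p^(a - B i) - I' i) with hddef
  set e : ℕ → ℕ := fun i => d i + 2*p^(2*(a - B i)) with hedef
  have hfacts : ∀ i ∈ S, p^(B i) * I' i = i ∧ ¬ p ∣ I' i ∧ I' i < p^(a - B i) ∧ B i < a := by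
    intro i hi
    simp only [hSdef, mem_Ico] at hi
    have hine : i ≠ 0 := by omega
    have hproj : p^(B i) * I' i = i := Nat.ordProj_mul_ordCompl_eq_self i p
    have hnd : ¬ p ∣ I' i := Nat.not_dvd_ordCompl hp hine
    have hBa : B i < a := by
      have hle : p^(B i) ≤ i := Nat.le_of_dvd (by omega) (Nat.ordProj_dvd i p)
      have : p^(B i) < p^a := lt_of_le_of_lt hle (by omega)
      exact (Nat.pow_lt_pow_iff_right hp1).mp this
    refine ⟨hproj, hnd, ?_, hBa⟩
    · -- I' i < p^(a - B i)
      by_contra hcon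
      push_neg at hcon
      have : p^(B i) * p^(a - B i) ≤ p^(B i) * I' i := Nat.mul_le_mul_left _ hcon
      rw [hproj, ← pow_add] at this
      have heq : B i + (a - B i) = a := by omega
      rw [heq] at this
      omega
  have c1 : ∀ i ∈ S, i*(n-i) = p^(2*B i) * d i := by
    intro i hi
    obtain ⟨hproj, hnd, hlt, hBa⟩ := hfacts i hi
    have hsub : n - i = p^(B i) * (p^(a - B i) - I' i) := by
      rw [Nat.mul_sub, ← pow_add, show B i + (a - B i) = a by omega, hproj]
    calc i*(n-i) = (p^(B i) * I' i) * (p^(B i) * (p^(a - B i) - I' i)) := by rw [hproj, hsub]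
      _ = p^(2*B i) * d i := by rw [hddef]; ring
  have c2 : ∀ i ∈ S, (n+i)*(2*n-i) = p^(2*B i) * e i := by
    intro i hi
    obtain ⟨hproj, hnd, hlt, hBa⟩ := hfacts i hi
    have hX : n = p^(B i) * p^(a - B i) := by
      rw [← pow_add, show B i + (a - B i) = a by omega]
    have hadd : n + i = p^(B i) * (p^(a - B i) + I' i) := by
      rw [Nat.mul_add, ← hX, hproj]
    have hsub2 : 2*n - i = p^(B i) * (2*p^(a - B i) - I' i) := by
      rw [Nat.mul_sub, hproj, ← mul_assoc, mul_comm (p^(B i)) 2, mul_assoc, ← hX]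
    rw [hadd, hsub2]
    have hkey : (p^(a - B i) + I' i) * (2*p^(a - B i) - I' i) = e i := by
      simp only [hedef, hddef]
      zify [hlt.le, le_trans hlt.le (by omega : p^(a-B i) ≤ 2*p^(a-B i))]
      ring
    calc (p^(B i) * (p^(a - B i) + I' i)) * (p^(B i) * (2*p^(a - B i) - I' i))
        = p^(2*B i) * ((p^(a - B i) + I' i) * (2*p^(a - B i) - I' i)) := by ring
      _ = p^(2*B i) * e i := by rw [hkey]
  have c3 : ∀ i ∈ S, ¬ p ∣ d i := by
    intro i hi
    obtain ⟨hproj, hnd, hlt, hBa⟩ := hfacts i hi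
    simp only [hddef]
    intro hdvd
    rcases (Nat.Prime.dvd_mul hp).mp hdvd with h | h
    · exact hnd h
    · have hpX : p ∣ p^(a - B i) := dvd_pow_self p (by omega)
      have : p ∣ I' i := by
        have := Nat.dvd_sub hpX h
        rw [show p^(a - B i) - (p^(a - B i) - I' i) = I' i by omega] at this
        exact this
      exact hnd this
  have c4 : ∀ i ∈ S, ((e i : ZMod (p^2))) = ((d i : ZMod (p^2))) := by
    intro i hi
    obtain ⟨hproj, hnd, hlt, hBa⟩ := hfacts i hi
    have hdvd : (p:ℕ)^2 ∣ 2*p^(2*(a - B i)) := Dvd.dvd.mul_left (pow_dvd_pow p (by omega)) 2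
    simp only [hedef]
    push_cast
    rw [show ((2:ZMod (p^2)) * (p:ZMod (p^2))^(2*(a-B i))) = (((2*p^(2*(a - B i)) : ℕ) : ZMod (p^2))) by push_cast; ring]
    rw [(ZMod.natCast_eq_zero_iff _ _).mpr hdvd]
    ring
  -- combine
  have h7 : C * ((∏ i ∈ S, p^(2*B i)) * (∏ i ∈ S, d i)) = (∏ i ∈ S, p^(2*B i)) * (∏ i ∈ S, e i) := by
    rw [← Finset.prod_mul_distrib, ← Finset.prod_mul_distrib]
    rw [← Finset.prod_congr rfl c1, ← Finset.prod_congr rfl c2]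
    exact h6
  have hPpos : 0 < ∏ i ∈ S, p^(2*B i) := Finset.prod_pos (fun i _ => pow_pos (by omega) _)
  have h8 : C * ∏ i ∈ S, d i = ∏ i ∈ S, e i := by
    have := h7
    rw [← mul_assoc, mul_comm C _, mul_assoc] at this
    exact Nat.eq_of_mul_eq_mul_left hPpos this
  have h9 := congrArg (Nat.cast : ℕ → ZMod (p^2)) h8
  push_cast at h9
  rw [Finset.prod_congr rfl c4] at h9
  have hunit : IsUnit (∏ i ∈ S, ((d i : ZMod (p^2)))) := by
    rw [← Nat.cast_prod]
    refine unit_of_not_dvd hp ?_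
    intro hdvd
    rcases (Nat.Prime.prime hp).exists_mem_finset_dvd hdvd with ⟨i, hi, hd⟩
    exact c3 i hi hd
  have := hunit.mul_right_cancel (by rw [one_mul]; exact h9 : (C : ZMod (p^2)) * ∏ i ∈ S, ((d i : ZMod (p^2))) = 1 * ∏ i ∈ S, ((d i : ZMod (p^2))))
  exact this




lemma pdvd (p : ℕ) : p ∣ p^2 := dvd_pow_self p two_ne_zero

lemma castHom_val (hp : p.Prime) (x : ZMod (p^2)) :
    ZMod.castHom (pdvd p) (ZMod p) x = ((x.val : ℕ) : ZMod p) := by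
  haveI : NeZero (p^2) := ⟨pow_ne_zero 2 hp.pos.ne'⟩
  rw [ZMod.natCast_val, ZMod.castHom_apply]

lemma pm (hp : p.Prime) (x y : ZMod (p^2))
    (h : ZMod.castHom (pdvd p) (ZMod p) x = ZMod.castHom (pdvd p) (ZMod p) y) :
    (p : ZMod (p^2)) * x = (p : ZMod (p^2)) * y := by
  haveI : NeZero (p^2) := ⟨pow_ne_zero 2 hp.pos.ne'⟩
  rw [castHom_val hp, castHom_val hp] at h
  have hmod : x.val ≡ y.val [MOD p] := (ZMod.natCast_eq_natCast_iff _ _ _).mp h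
  have hmod2 : p * x.val ≡ p * y.val [MOD p * p] := hmod.mul_left' _
  have hcast : ((p * x.val : ℕ) : ZMod (p^2)) = ((p * y.val : ℕ) : ZMod (p^2)) := by
    rw [ZMod.natCast_eq_natCast_iff]
    simpa [pow_two] using hmod2
  push_cast at hcast
  rwa [ZMod.natCast_val, ZMod.natCast_val, ZMod.cast_id, ZMod.cast_id] at hcast

lemma pm2 (hp : p.Prime) (x y : ZMod (p^2)) (h : (p : ZMod (p^2)) * x = (p : ZMod (p^2)) * y) :
    ZMod.castHom (pdvd p) (ZMod p) x = ZMod.castHom (pdvd p) (ZMod p) y := by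
  haveI : NeZero (p^2) := ⟨pow_ne_zero 2 hp.pos.ne'⟩
  have hzz : (p : ZMod (p^2)) * (x - y) = 0 := by rw [mul_sub, h, sub_self]
  have hval : ((x-y).val : ZMod (p^2)) = x - y := by rw [ZMod.natCast_val, ZMod.cast_id]
  rw [← hval, ← Nat.cast_mul] at hzz
  have hdvd : p^2 ∣ p * (x-y).val := (ZMod.natCast_eq_zero_iff _ _).mp hzz
  have hdvd' : p*p ∣ p * (x-y).val := by
    have hpp : p^2 = p*p := pow_two p
    exact hpp ▸ hdvd
  have hdvd2 : p ∣ (x-y).val := (mul_dvd_mul_iff_left (hp.pos.ne' : p ≠ 0)).mp hdvd'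
  have hfin : ZMod.castHom (pdvd p) (ZMod p) (x - y) = 0 := by
    rw [castHom_val hp]
    exact (ZMod.natCast_eq_zero_iff _ _).mpr hdvd2
  rw [map_sub, sub_eq_zero] at hfin
  exact hfin

lemma invmap (hp : p.Prime) {k : ℕ} (hk : ¬ p ∣ k) :
    ZMod.castHom (pdvd p) (ZMod p) (((k : ZMod (p^2)))⁻¹) = ((k : ZMod p))⁻¹ := by
  haveI : Fact p.Prime := ⟨hp⟩
  have hu : IsUnit ((k : ZMod (p^2))) := by
    rw [ZMod.isUnit_iff_coprime]
    exact Nat.Coprime.pow_right 2 ((hp.coprime_iff_not_dvd.mpr hk).symm)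
  have h1 : ((k : ZMod (p^2)))⁻¹ * (k : ZMod (p^2)) = 1 := ZMod.inv_mul_of_unit _ hu
  have h2 := congrArg (ZMod.castHom (pdvd p) (ZMod p)) h1
  rw [map_mul, map_one, map_natCast] at h2
  exact eq_inv_of_mul_eq_one_left h2

lemma not_two_dvd_p2 (hp : p.Prime) (hp2 : p ≠ 2) : ¬ (2 ∣ p^2) := by
  have hodd : Odd (p^2) := (hp.odd_of_ne_two hp2).pow
  intro hd
  have := Nat.odd_iff.mp hodd
  omega

-- B2
lemma two_pow_pa (hp : p.Prime) (hp2 : p ≠ 2) {a : ℕ} (ha : 0 < a) :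
    ((2 : ZMod (p^2)))^(p^a) = (2 : ZMod (p^2))^p := by
  have hp1 : 1 < p := hp.one_lt
  have hcop : Nat.Coprime 2 (p^2) := Nat.prime_two.coprime_iff_not_dvd.mpr (not_two_dvd_p2 hp hp2)
  have htot : (p^2).totient = p*(p-1) := by
    rw [Nat.totient_prime_pow hp (by omega)]
    norm_num
  have hmod : 2^(p*(p-1)) ≡ 1 [MOD p^2] := by
    have := Nat.ModEq.pow_totient hcop
    rwa [htot] at this
  have hone : ((2:ZMod (p^2)))^(p*(p-1)) = 1 := by
    have := (ZMod.natCast_eq_natCast_iff _ _ _).mpr hmod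
    push_cast at this
    exact this
  have hdvd1 : (p-1) ∣ p^(a-1) - 1 := by
    have := Nat.sub_dvd_pow_sub_pow p 1 (a-1)
    simpa using this
  obtain ⟨s, hs⟩ := hdvd1
  have hple : p ≤ p^a := Nat.le_self_pow (by omega) p
  have hpa : p^a = p + p*(p-1)*s := by
    have h1 : p^a = p * p^(a-1) := by
      rw [← pow_succ']
      congr 1
      omega
    have h2 : 1 ≤ p^(a-1) := Nat.one_le_pow _ _ (by omega)
    rw [h1]
    have h3 : p^(a-1) = 1 + (p-1)*s := by omega
    rw [h3]
    ring
  rw [hpa, pow_add, pow_mul, hone, one_pow, mul_one]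

-- Fermat quotient q
lemma fermat_q (hp : p.Prime) (hp2 : p ≠ 2) : ∃ q : ℕ, 2^(p-1) = 1 + p*q := by
  haveI : Fact p.Prime := ⟨hp⟩
  have hple : 2 ≤ p := hp.two_le
  have h2 : ((2:ZMod p)) ≠ 0 := by
    intro h
    have hdvd : (p:ℕ) ∣ 2 := by
      have := (ZMod.natCast_eq_zero_iff 2 p).mp (by exact_mod_cast h)
      exact this
    have := Nat.le_of_dvd (by omega) hdvd
    omega
  have hflt : ((2:ZMod p))^(p-1) = 1 := ZMod.pow_card_sub_one_eq_one h2
  have hcast : ((2^(p-1) : ℕ) : ZMod p) = ((1:ℕ) : ZMod p) := by push_cast [hflt]; rfl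
  have hmod := (ZMod.natCast_eq_natCast_iff _ _ _).mp hcast
  have hp1 : 1 < p := hp.one_lt
  have h1 : 1 % p = 1 := Nat.mod_eq_of_lt hp1
  have hge : 1 ≤ 2^(p-1) := Nat.one_le_two_pow
  unfold Nat.ModEq at hmod
  refine ⟨2^(p-1)/p, ?_⟩
  have he1 := Nat.mod_add_div (2^(p-1)) p
  have h2p : 2^(p-1) % p = 1 := by omega
  omega

-- sum of middle binomials
lemma sum_choose_mid (hp : p.Prime) : ∑ k ∈ Ico 1 p, p.choose k = 2^p - 2 := by
  have hp1 : 1 < p := hp.one_lt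
  have h := Nat.sum_range_choose p
  have h1 : ∑ k ∈ range (p+1), p.choose k = p.choose 0 + (∑ k ∈ Ico 1 p, p.choose k) + p.choose p := by
    rw [range_eq_Ico, Finset.sum_eq_sum_Ico_succ_bot (by omega : 0 < p+1)]
    rw [Finset.sum_Ico_succ_top (by omega : 1 ≤ p)]
    ring
  rw [h1] at h
  simp only [Nat.choose_zero_right, Nat.choose_self] at h
  have hge : 2 ≤ 2^p := by
    calc 2 = 2^1 := by norm_num
    _ ≤ 2^p := Nat.pow_le_pow_right (by omega) (by omega)
  omega

-- per-term evaluation of C(p,k) in ZMod p^2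
lemma choose_p_eval (hp : p.Prime) {k : ℕ} (hk1 : 1 ≤ k) (hkp : k < p) :
    ((p.choose k : ZMod (p^2))) = (p : ZMod (p^2)) * ((-1)^(k-1) * ((k : ZMod (p^2)))⁻¹) := by
  have hp1 : 1 < p := hp.one_lt
  have hid : p * (p-1).choose (k-1) = p.choose k * k := by
    have h := Nat.add_one_mul_choose_eq (p-1) (k-1)
    rw [show p-1+1 = p by omega, show k-1+1 = k by omega] at h
    exact h
  have hcast := congrArg (Nat.cast : ℕ → ZMod (p^2)) hid
  push_cast at hcast
  have hC' : (p : ZMod (p^2)) * ((p-1).choose (k-1) : ZMod (p^2))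
      = (p : ZMod (p^2)) * ((-1:ZMod (p^2))^(k-1)) := by
    apply pm hp
    rw [map_natCast, map_pow, map_neg, map_one]
    exact choose_p_sub_one hp (k-1) (by omega)
  have hnd : ¬ p ∣ k := by
    intro hd
    have := Nat.le_of_dvd (by omega) hd
    omega
  have hu : IsUnit ((k : ZMod (p^2))) := by
    rw [ZMod.isUnit_iff_coprime]
    exact Nat.Coprime.pow_right 2 ((hp.coprime_iff_not_dvd.mpr hnd).symm)
  have hki : ((k : ZMod (p^2))) * ((k : ZMod (p^2)))⁻¹ = 1 := ZMod.mul_inv_of_unit _ hu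
  calc ((p.choose k : ZMod (p^2)))
      = ((p.choose k : ZMod (p^2))) * (((k : ZMod (p^2))) * ((k : ZMod (p^2)))⁻¹) := by
        rw [hki, mul_one]
    _ = ((p.choose k : ZMod (p^2)) * (k : ZMod (p^2))) * ((k : ZMod (p^2)))⁻¹ := by ring
    _ = ((p : ZMod (p^2)) * ((p-1).choose (k-1) : ZMod (p^2))) * ((k : ZMod (p^2)))⁻¹ := by
        rw [← hcast]
    _ = ((p : ZMod (p^2)) * ((-1:ZMod (p^2))^(k-1))) * ((k : ZMod (p^2)))⁻¹ := by rw [hC']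
    _ = (p : ZMod (p^2)) * ((-1)^(k-1) * ((k : ZMod (p^2)))⁻¹) := by ring




lemma shalf_eval (hp : p.Prime) (hp2 : p ≠ 2) {q : ℕ} (hq : 2^(p-1) = 1 + p*q) :
    (∑ v ∈ Ico 1 ((p-1)/2 + 1), (-1:ZMod p)^(v-1) * ((v : ZMod p))⁻¹) = (q : ZMod p) := by
  haveI : Fact p.Prime := ⟨hp⟩
  have hp1 : 1 < p := hp.one_lt
  have hpodd : Odd p := hp.odd_of_ne_two hp2
  have hp3 : 3 ≤ p := by
    rcases hpodd with ⟨c, hc⟩; omega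
  have hpm : p % 2 = 1 := Nat.odd_iff.mp hpodd
  -- step 1 : p * Sfull = p * 2q in ZMod p^2
  have hstep1 : (p : ZMod (p^2)) * (∑ k ∈ Ico 1 p, (-1:ZMod (p^2))^(k-1) * ((k : ZMod (p^2)))⁻¹)
      = (p : ZMod (p^2)) * ((2*q : ℕ) : ZMod (p^2)) := by
    have hL : ∑ k ∈ Ico 1 p, ((p.choose k : ZMod (p^2)))
        = (p : ZMod (p^2)) * ∑ k ∈ Ico 1 p, (-1:ZMod (p^2))^(k-1) * ((k : ZMod (p^2)))⁻¹ := by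
      rw [Finset.mul_sum]
      refine Finset.sum_congr rfl fun k hk => ?_
      rw [mem_Ico] at hk
      exact choose_p_eval hp hk.1 hk.2
    have hnat : 2^p - 2 = 2*(p*q) := by
      have h2p : 2^p = 2*2^(p-1) := by
        rw [← pow_succ']
        congr 1
        omega
      omega
    have hR : ∑ k ∈ Ico 1 p, ((p.choose k : ZMod (p^2))) = ((2*(p*q) : ℕ) : ZMod (p^2)) := by
      rw [← Nat.cast_sum, sum_choose_mid hp, hnat]
    rw [← hL, hR]
    push_cast
    ring
  -- step 2 : Sfull in ZMod p equals 2q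
  have hstep2 : (∑ k ∈ Ico 1 p, (-1:ZMod p)^(k-1) * ((k : ZMod p))⁻¹) = ((2*q : ℕ) : ZMod p) := by
    have := pm2 hp _ _ hstep1
    rw [map_natCast] at this
    rw [map_sum] at this
    rw [← this]
    refine (Finset.sum_congr rfl fun k hk => ?_).symm
    rw [mem_Ico] at hk
    have hnd : ¬ p ∣ k := fun hd => by
      have := Nat.le_of_dvd (by omega) hd; omega
    rw [map_mul, map_pow, map_neg, map_one, invmap hp hnd]
  -- step 3 : pairing Sfull = 2 * Shalf
  have hstep3 : (∑ k ∈ Ico 1 p, (-1:ZMod p)^(k-1) * ((k : ZMod p))⁻¹)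
      = 2 * ∑ v ∈ Ico 1 ((p-1)/2+1), (-1:ZMod p)^(v-1) * ((v : ZMod p))⁻¹ := by
    rw [← Finset.sum_Ico_consecutive _ (by omega : 1 ≤ (p-1)/2+1) (by omega : (p-1)/2+1 ≤ p)]
    have hsecond : (∑ k ∈ Ico ((p-1)/2+1) p, (-1:ZMod p)^(k-1) * ((k : ZMod p))⁻¹)
        = ∑ v ∈ Ico 1 ((p-1)/2+1), (-1:ZMod p)^(v-1) * ((v : ZMod p))⁻¹ := by
      refine Finset.sum_nbij' (fun k => p - k) (fun v => p - v) ?_ ?_ ?_ ?_ ?_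
      · intro k hk; simp only [mem_Ico] at hk ⊢; omega
      · intro v hv; simp only [mem_Ico] at hv ⊢; omega
      · intro k hk; simp only [mem_Ico] at hk ⊢; omega
      · intro v hv; simp only [mem_Ico] at hv ⊢; omega
      · intro k hk
        rw [mem_Ico] at hk
        have hcast : ((p - k : ℕ) : ZMod p) = - (k : ZMod p) := by
          rw [Nat.cast_sub (by omega : k ≤ p), ZMod.natCast_self]
          ring
        rw [hcast, inv_neg]
        have hkne : ((k : ZMod p)) ≠ 0 := by
          rw [Ne, ZMod.natCast_eq_zero_iff]
          intro hd
          have := Nat.le_of_dvd (by omega) hd; omega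
        rcases Nat.even_or_odd k with he | ho
        · have h1 : Odd (k-1) := by rcases he with ⟨c,hc⟩; exact ⟨c-1, by omega⟩
          have h2 : Even (p-k-1) := by rcases he with ⟨c,hc⟩; rcases hpodd with ⟨d,hd⟩; exact ⟨d-c, by omega⟩
          rw [h1.neg_one_pow, h2.neg_one_pow]
          ring
        · have h1 : Even (k-1) := by rcases ho with ⟨c,hc⟩; exact ⟨c, by omega⟩
          have h2 : Odd (p-k-1) := by rcases ho with ⟨c,hc⟩; rcases hpodd with ⟨d,hd⟩; exact ⟨d-c-1, by omega⟩
          rw [h1.neg_one_pow, h2.neg_one_pow]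
          ring
    rw [hsecond]
    ring
  -- combine
  rw [hstep3] at hstep2
  have h2ne : (2 : ZMod p) ≠ 0 := by
    intro h
    have hdvd : (p:ℕ) ∣ 2 := by
      have := (ZMod.natCast_eq_zero_iff 2 p).mp (by exact_mod_cast h)
      exact this
    have := Nat.le_of_dvd (by omega) hdvd
    omega
  have := mul_left_cancel₀ h2ne (hstep2.trans (by push_cast; ring))
  exact this




lemma tail_eval (hp : p.Prime) (hp2 : p ≠ 2) {a : ℕ} (ha : 0 < a) {q : ℕ}
    (hq : 2^(p-1) = 1 + p*q) :
    ∑ i ∈ (range (p^a)).erase ((p^a - 1)/2),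
        (-1:ZMod (p^2))^i * ((2*p^a).choose (p^a + 1 + 2*i) : ZMod (p^2))
      = ((-1:ZMod (p^2))^((p-1)/2))^a * ((p:ZMod (p^2)) * (q:ZMod (p^2))) := by
  haveI : Fact p.Prime := ⟨hp⟩
  have hp1 : 1 < p := hp.one_lt
  have hpodd : Odd p := hp.odd_of_ne_two hp2
  have hpm : p % 2 = 1 := Nat.odd_iff.mp hpodd
  have hp3 : 3 ≤ p := by omega
  have hP1 : 1 ≤ p^(a-1) := Nat.one_le_pow _ _ (by omega)
  have hPodd : Odd (p^(a-1)) := hpodd.pow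
  have hPm : p^(a-1) % 2 = 1 := Nat.odd_iff.mp hPodd
  have hnP : p^a = p^(a-1) * p := by
    rw [← pow_succ]
    congr 1
    omega
  have hn1 : 1 < p^a := Nat.one_lt_pow (by omega) (by omega)
  have hnodd : Odd (p^a) := hpodd.pow
  have hnm : p^a % 2 = 1 := Nat.odd_iff.mp hnodd
  -- facts about u_v, j_v for v in range
  have hufacts : ∀ v, 1 ≤ v → v ≤ (p-1)/2 →
      Odd (p-2*v) ∧ 1 ≤ p-2*v ∧ p-2*v < p ∧ Odd (p^(a-1)*(p-2*v)) ∧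
      p^(a-1)*(p-2*v) < p^a ∧ 1 ≤ p^(a-1)*(p-2*v) := by
    intro v hv1 hv2
    have hu_odd : Odd (p-2*v) := by rw [Nat.odd_iff]; omega
    have hu_pos : 1 ≤ p-2*v := by omega
    have hu_lt : p-2*v < p := by omega
    refine ⟨hu_odd, hu_pos, hu_lt, hPodd.mul hu_odd, ?_, ?_⟩
    · rw [hnP]
      exact mul_lt_mul_of_pos_left hu_lt (by omega : 0 < p^(a-1))
    · exact Nat.one_le_iff_ne_zero.mpr (by positivity)
  set T := (Ico 1 ((p-1)/2+1)).image (fun v => (p^(a-1)*(p-2*v) - 1)/2) with hT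
  -- T ⊆ erase
  have hTsub : T ⊆ (range (p^a)).erase ((p^a - 1)/2) := by
    intro i hi
    obtain ⟨v, hv, rfl⟩ := mem_image.mp hi
    rw [mem_Ico] at hv
    obtain ⟨huo, hu1, hulp, hjo, hjlt, hj1⟩ := hufacts v hv.1 (by omega)
    have hjm := Nat.odd_iff.mp hjo
    rw [mem_erase, mem_range]
    omega
  -- vanishing off T
  have hvanish : ∀ i ∈ (range (p^a)).erase ((p^a - 1)/2), i ∉ T →
      (-1:ZMod (p^2))^i * ((2*p^a).choose (p^a + 1 + 2*i) : ZMod (p^2)) = 0 := by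
    intro i hi hiT
    rw [mem_erase, mem_range] at hi
    obtain ⟨hiy, hin⟩ := hi
    by_cases hjn : p^a < 2*i+1
    · have hlt : 2*p^a < p^a+1+2*i := by omega
      rw [Nat.choose_eq_zero_of_lt hlt]
      push_cast
      ring
    · push_neg at hjn
      have hjlt : 2*i+1 < p^a := by omega
      by_cases hdvd : p^(a-1) ∣ 2*i+1
      · exfalso
        apply hiT
        obtain ⟨u, hu⟩ := hdvd
        have huodd : Odd u := by
          have : Odd (2*i+1) := ⟨i, by omega⟩
          rw [hu] at this
          exact (Nat.odd_mul.mp this).2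
        have hum := Nat.odd_iff.mp huodd
        have hu1 : 1 ≤ u := by
          rcases Nat.eq_zero_or_pos u with h0 | h1
          · rw [h0, mul_zero] at hu; omega
          · exact h1
        have hulp : u < p := by
          by_contra hcon
          push_neg at hcon
          have : p^(a-1) * p ≤ p^(a-1) * u := Nat.mul_le_mul_left _ hcon
          rw [← hnP, ← hu] at this
          omega
        refine mem_image.mpr ⟨(p-u)/2, mem_Ico.mpr ⟨by omega, by omega⟩, ?_⟩
        have hpu : p - 2*((p-u)/2) = u := by omega
        rw [hpu, ← hu]
        omega
      · have heq : p^a+1+2*i = p^a + (2*i+1) := by omega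
        rw [heq, K2 hp ha (by omega) hjlt hdvd]
        ring
  rw [← Finset.sum_subset hTsub hvanish]
  -- sum over image
  have hinj : ∀ v₁ ∈ Ico 1 ((p-1)/2+1), ∀ v₂ ∈ Ico 1 ((p-1)/2+1),
      (p^(a-1)*(p-2*v₁) - 1)/2 = (p^(a-1)*(p-2*v₂) - 1)/2 → v₁ = v₂ := by
    intro v₁ h₁ v₂ h₂ heq
    rw [mem_Ico] at h₁ h₂
    obtain ⟨h1o, h11, _, _, _, h1p⟩ := hufacts v₁ h₁.1 (by omega)
    obtain ⟨h2o, h21, _, _, _, h2p⟩ := hufacts v₂ h₂.1 (by omega)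
    have hm1 := Nat.odd_iff.mp (hPodd.mul h1o)
    have hm2 := Nat.odd_iff.mp (hPodd.mul h2o)
    have hjeq : p^(a-1)*(p-2*v₁) = p^(a-1)*(p-2*v₂) := by omega
    have := Nat.eq_of_mul_eq_mul_left (by omega : 0 < p^(a-1)) hjeq
    omega
  rw [hT, Finset.sum_image hinj]
  -- per-term evaluation
  have hterm : ∀ v ∈ Ico 1 ((p-1)/2+1),
      (-1:ZMod (p^2))^((p^(a-1)*(p-2*v) - 1)/2)
        * ((2*p^a).choose (p^a + 1 + 2*((p^(a-1)*(p-2*v) - 1)/2)) : ZMod (p^2))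
      = (((-1:ZMod (p^2))^((p-1)/2))^(a-1) * (-1)^((p-1)/2)) *
          ((p:ZMod (p^2)) * ((-1:ZMod (p^2))^v * 2 * (((p + (p-2*v) : ℕ) : ZMod (p^2)))⁻¹)) := by
    intro v hv
    rw [mem_Ico] at hv
    obtain ⟨huo, hu1, hulp, hjo, hjlt, hj1⟩ := hufacts v hv.1 (by omega)
    have hjm := Nat.odd_iff.mp hjo
    -- index arithmetic
    have hidx : p^a + 1 + 2*((p^(a-1)*(p-2*v) - 1)/2) = p^a + p^(a-1)*(p-2*v) := by omega
    rw [hidx]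
    -- sign
    have hsign : (-1:ZMod (p^2))^((p^(a-1)*(p-2*v) - 1)/2)
        = ((-1:ZMod (p^2))^((p-1)/2))^(a-1) * ((-1)^((p-1)/2) * (-1)^v) := by
      rw [chi_pow hpodd (a-1) huo]
      congr 1
      have h1 : (p-2*v-1)/2 = (p-1)/2 - v := by omega
      rw [h1, neg_one_pow_sub (by omega : v ≤ (p-1)/2)]
    rw [hsign]
    -- choose value
    have hwnd : ¬ p ∣ (p + (p-2*v)) := by
      intro hd
      have : p ∣ (p-2*v) := (Nat.dvd_add_right (dvd_refl p)).mp hd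
      have := Nat.le_of_dvd (by omega) this
      omega
    have hwu : IsUnit (((p + (p-2*v) : ℕ) : ZMod (p^2))) := by
      rw [ZMod.isUnit_iff_coprime]
      exact Nat.Coprime.pow_right 2 ((hp.coprime_iff_not_dvd.mpr hwnd).symm)
    have hK3 := K3 hp ha huo hu1 hulp
    have hCval : ((2*p^a).choose (p^a + p^(a-1)*(p-2*v)) : ZMod (p^2))
        = (((p + (p-2*v) : ℕ) : ZMod (p^2)))⁻¹ * (2*p) := by
      calc ((2*p^a).choose (p^a + p^(a-1)*(p-2*v)) : ZMod (p^2))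
          = ((((p + (p-2*v) : ℕ) : ZMod (p^2)))⁻¹ * (((p + (p-2*v) : ℕ) : ZMod (p^2))))
            * ((2*p^a).choose (p^a + p^(a-1)*(p-2*v)) : ZMod (p^2)) := by
            rw [ZMod.inv_mul_of_unit _ hwu, one_mul]
        _ = (((p + (p-2*v) : ℕ) : ZMod (p^2)))⁻¹ * (2*p) := by
            rw [mul_assoc, hK3]
    rw [hCval]
    ring
  rw [Finset.sum_congr rfl hterm, ← Finset.mul_sum]
  -- pull out p and evaluate Z
  have hZ : (p:ZMod (p^2)) * (∑ v ∈ Ico 1 ((p-1)/2+1),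
        (-1:ZMod (p^2))^v * 2 * (((p + (p-2*v) : ℕ) : ZMod (p^2)))⁻¹)
      = (p:ZMod (p^2)) * (q:ZMod (p^2)) := by
    apply pm hp
    rw [map_natCast, map_sum]
    rw [← shalf_eval hp hp2 hq]
    refine Finset.sum_congr rfl fun v hv => ?_
    rw [mem_Ico] at hv
    have h2vp : 2*v ≤ p := by omega
    have hwnd : ¬ p ∣ (p + (p-2*v)) := by
      intro hd
      have h1 : p ∣ (p-2*v) := (Nat.dvd_add_right (dvd_refl p)).mp hd
      have := Nat.le_of_dvd (by omega) h1
      omega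
    rw [map_mul, map_mul, map_pow, map_neg, map_one, map_ofNat, invmap hp hwnd]
    have hcast : ((p + (p-2*v) : ℕ) : ZMod p) = - ((2*v : ℕ) : ZMod p) := by
      push_cast [Nat.cast_sub h2vp]
      rw [ZMod.natCast_self]
      ring
    rw [hcast, inv_neg]
    have hvne : ((v : ZMod p)) ≠ 0 := by
      rw [Ne, ZMod.natCast_eq_zero_iff]
      intro hd
      have := Nat.le_of_dvd (by omega) hd
      omega
    have h2ne : ((2 : ZMod p)) ≠ 0 := by
      intro h
      have hdvd : (p:ℕ) ∣ 2 := by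
        have := (ZMod.natCast_eq_zero_iff 2 p).mp (by exact_mod_cast h)
        exact this
      have := Nat.le_of_dvd (by omega) hdvd
      omega
    have hsplit2 : (((2*v : ℕ) : ZMod p))⁻¹ = 2⁻¹ * ((v : ZMod p))⁻¹ := by
      push_cast
      rw [mul_inv]
    rw [hsplit2]
    have hsgn : (-1:ZMod p)^v = - (-1:ZMod p)^(v-1) := by
      conv_lhs => rw [show v = (v-1)+1 by omega]
      rw [pow_succ]
      ring
    rw [hsgn]
    field_simp
  have hfactor : (∑ v ∈ Ico 1 ((p-1)/2+1),
        ((p:ZMod (p^2)) * ((-1:ZMod (p^2))^v * 2 * (((p + (p-2*v) : ℕ) : ZMod (p^2)))⁻¹)))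
      = (p:ZMod (p^2)) * (∑ v ∈ Ico 1 ((p-1)/2+1),
        (-1:ZMod (p^2))^v * 2 * (((p + (p-2*v) : ℕ) : ZMod (p^2)))⁻¹) := by
    rw [Finset.mul_sum]
  rw [hfactor, hZ]
  have hchi : ((-1:ZMod (p^2))^((p-1)/2))^(a-1) * (-1:ZMod (p^2))^((p-1)/2)
      = ((-1:ZMod (p^2))^((p-1)/2))^a := by
    rw [← pow_succ]
    congr 1
    omega
  rw [hchi]




theorem stmt4 (p : ℕ) (hp : p.Prime) (hp2 : p ≠ 2) (a : ℕ) (ha : 0 < a) :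
    (∑ k ∈ Finset.range (p ^ a),
        (Nat.choose (2 * k) k : ZMod (p ^ 2)) * ((2 : ZMod (p ^ 2)) ^ k)⁻¹) =
      (-1 : ZMod (p ^ 2)) ^ ((p ^ a - 1) / 2) ∧
    (∑ k ∈ Finset.Ico 1 (p ^ a),
        (Nat.choose (2 * k) (k + 1) : ZMod (p ^ 2)) * ((2 : ZMod (p ^ 2)) ^ k)⁻¹) =
      1 - (2 : ZMod (p ^ 2)) ^ (p - 1) := by
  have hp1 : 1 < p := hp.one_lt
  have hpodd : Odd p := hp.odd_of_ne_two hp2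
  have hpm : p % 2 = 1 := Nat.odd_iff.mp hpodd
  have hn1 : 1 < p^a := Nat.one_lt_pow (by omega) (by omega)
  have hnodd : Odd (p^a) := hpodd.pow
  have hnm : p^a % 2 = 1 := Nat.odd_iff.mp hnodd
  obtain ⟨q, hq⟩ := fermat_q hp hp2
  have h2unit : IsUnit ((2:ZMod (p^2))) := by
    rw [show ((2:ZMod (p^2))) = ((2:ℕ) : ZMod (p^2)) by push_cast; ring, ZMod.isUnit_iff_coprime]
    apply Nat.Coprime.pow_right
    rw [Nat.coprime_comm]
    exact hp.coprime_iff_not_dvd.mpr (fun hd => by have := Nat.le_of_dvd (by omega) hd; omega)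
  -- 2^(n-1) = 2^(p-1) = 1 + p*q in ZMod p^2
  have h2p1 : ((2:ZMod (p^2)))^(p-1) = 1 + (p:ZMod (p^2))*(q:ZMod (p^2)) := by
    have := congrArg (Nat.cast : ℕ → ZMod (p^2)) hq
    push_cast at this
    exact this
  have h2n1 : ((2:ZMod (p^2)))^(p^a-1) = ((2:ZMod (p^2)))^(p-1) := by
    have h1 : ((2:ZMod (p^2)))^(p^a-1) * 2 = ((2:ZMod (p^2)))^(p-1) * 2 := by
      rw [← pow_succ, ← pow_succ, show p^a-1+1 = p^a by omega, show p-1+1 = p by omega]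
      exact two_pow_pa hp hp2 ha
    exact h2unit.mul_right_cancel h1
  have hpowunit : IsUnit (((2:ZMod (p^2)))^(p^a - 1)) := h2unit.pow _
  constructor
  · -- first sum
    apply hpowunit.mul_right_cancel
    have hL : (∑ k ∈ Finset.range (p ^ a),
          ((2*k).choose k : ZMod (p ^ 2)) * ((2 : ZMod (p ^ 2)) ^ k)⁻¹) * (2:ZMod (p^2))^(p^a-1)
        = ∑ k ∈ Finset.range (p^a), ((2*k).choose k : ZMod (p^2)) * (2:ZMod (p^2))^(p^a-1-k) := by
      rw [Finset.sum_mul]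
      refine Finset.sum_congr rfl fun k hk => ?_
      rw [mem_range] at hk
      have hsplit : ((2:ZMod (p^2)))^(p^a-1) = (2:ZMod (p^2))^k * (2:ZMod (p^2))^(p^a-1-k) := by
        rw [← pow_add]
        congr 1
        omega
      rw [mul_assoc, hsplit, ← mul_assoc ((2 : ZMod (p ^ 2)) ^ k)⁻¹, ZMod.inv_mul_of_unit _ (h2unit.pow k), one_mul]
    rw [hL]
    -- use ident1
    have hid := congrArg (Int.cast : ℤ → ZMod (p^2)) (ident1 (p^a))
    push_cast at hid
    have hL2 : (∑ k ∈ Finset.range (p^a), ((2*k).choose k : ZMod (p^2)) * (2:ZMod (p^2))^(p^a-1-k))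
        = ∑ i ∈ range (p^a), (-1:ZMod (p^2))^i * ((2*p^a).choose (p^a+1+2*i) : ZMod (p^2)) := by
      rw [← hid]
      exact Finset.sum_congr rfl fun k _ => by ring
    rw [hL2]
    -- split off i = y
    have hymem : (p^a-1)/2 ∈ range (p^a) := by rw [mem_range]; omega
    rw [← Finset.add_sum_erase _ _ hymem]
    have hmain : (-1:ZMod (p^2))^((p^a-1)/2) * ((2*p^a).choose (p^a+1+2*((p^a-1)/2)) : ZMod (p^2))
        = (-1:ZMod (p^2))^((p^a-1)/2) := by
      rw [show p^a+1+2*((p^a-1)/2) = 2*p^a by omega, Nat.choose_self]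
      push_cast
      ring
    rw [hmain, tail_eval hp hp2 ha hq]
    -- (-1)^y = chi^a
    have hchi : (-1:ZMod (p^2))^((p^a-1)/2) = ((-1:ZMod (p^2))^((p-1)/2))^a := by
      have := chi_pow (α := ZMod (p^2)) hpodd a (u := 1) odd_one
      simpa using this
    rw [hchi, h2n1, h2p1]
    ring
  · -- second sum
    apply hpowunit.mul_right_cancel
    have hext : (∑ k ∈ Finset.Ico 1 (p ^ a),
          ((2*k).choose (k+1) : ZMod (p ^ 2)) * ((2 : ZMod (p ^ 2)) ^ k)⁻¹)
        = ∑ k ∈ Finset.range (p ^ a),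
          ((2*k).choose (k+1) : ZMod (p ^ 2)) * ((2 : ZMod (p ^ 2)) ^ k)⁻¹ := by
      rw [range_eq_Ico, Finset.sum_eq_sum_Ico_succ_bot (by omega : 0 < p^a)]
      norm_num
    rw [hext]
    have hL : (∑ k ∈ Finset.range (p ^ a),
          ((2*k).choose (k+1) : ZMod (p ^ 2)) * ((2 : ZMod (p ^ 2)) ^ k)⁻¹) * (2:ZMod (p^2))^(p^a-1)
        = ∑ k ∈ Finset.range (p^a), ((2*k).choose (k+1) : ZMod (p^2)) * (2:ZMod (p^2))^(p^a-1-k) := by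
      rw [Finset.sum_mul]
      refine Finset.sum_congr rfl fun k hk => ?_
      rw [mem_range] at hk
      have hsplit : ((2:ZMod (p^2)))^(p^a-1) = (2:ZMod (p^2))^k * (2:ZMod (p^2))^(p^a-1-k) := by
        rw [← pow_add]
        congr 1
        omega
      rw [mul_assoc, hsplit, ← mul_assoc ((2 : ZMod (p ^ 2)) ^ k)⁻¹, ZMod.inv_mul_of_unit _ (h2unit.pow k), one_mul]
    rw [hL]
    have hid := congrArg (Int.cast : ℤ → ZMod (p^2)) (ident2 (p^a - 1))
    rw [show p^a - 1 + 1 = p^a by omega] at hid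
    push_cast at hid
    have hL2 : (∑ k ∈ Finset.range (p^a), ((2*k).choose (k+1) : ZMod (p^2)) * (2:ZMod (p^2))^(p^a-1-k))
        = ((2*(p^a-1)+1).choose (p^a) : ZMod (p^2)) - 2^(p^a-1) := by
      rw [← hid]
      exact Finset.sum_congr rfl fun k _ => by ring
    rw [hL2]
    -- choose symm + wolsten
    have hsymm : (2*(p^a-1)+1).choose (p^a) = (2*p^a - 1).choose (p^a - 1) := by
      have h1 : 2*(p^a-1)+1 = 2*p^a - 1 := by omega
      rw [h1]
      rw [← Nat.choose_symm (by omega : p^a ≤ 2*p^a - 1)]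
      congr 1
      omega
    rw [hsymm, wolsten hp hp2 ha, h2n1, h2p1]
    have hzero : ((p:ZMod (p^2))*(q:ZMod (p^2)))^2 = 0 := by
      have hpp : ((p:ZMod (p^2)))^2 = 0 := by
        rw [← Nat.cast_pow, ZMod.natCast_self]
      calc ((p:ZMod (p^2))*(q:ZMod (p^2)))^2 = ((p:ZMod (p^2)))^2 * ((q:ZMod (p^2)))^2 := by ring
        _ = 0 := by rw [hpp, zero_mul]
    linear_combination hzero

end Aux
end

section
/- Let p be an odd prime and let a be a positive integer. Then ∑_{k=1}^{p^a-1} binom(2k,k+1)/4^k ≡ p·δ_{a,1} - 4^{p-1} (mod p²) and ∑_{k=1}^{p^a-1} C_k/4^k ≡ 2^p - 2 (mod p²), where δ_{a,1} equals 1 if a = 1 and 0 otherwise. -/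
open Finset

private lemma cbSum (N : ℕ) :
    ∑ k ∈ range N, (2 * k).choose k * 4 ^ (N - k) = 2 * N * Nat.centralBinom N := by
  induction N with
  | zero => simp
  | succ n ih =>
    rw [Finset.sum_range_succ]
    have hstep : ∀ k ∈ range n,
        (2 * k).choose k * 4 ^ (n + 1 - k) = 4 * ((2 * k).choose k * 4 ^ (n - k)) := by
      intro k hk
      have hk' : k < n := mem_range.mp hk
      have h : n + 1 - k = (n - k) + 1 := by omega
      rw [h, pow_succ]; ring
    rw [Finset.sum_congr rfl hstep, ← Finset.mul_sum, ih]
    have h1 : n + 1 - n = 1 := by omega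
    rw [h1]
    have h2 : (2 * n).choose n = Nat.centralBinom n := rfl
    have h3 := Nat.succ_mul_centralBinom_succ n
    calc 4 * (2 * n * Nat.centralBinom n) + (2 * n).choose n * 4 ^ 1
        = 4 * (2 * n * Nat.centralBinom n) + 4 * Nat.centralBinom n := by rw [h2]; ring
      _ = 2 * (2 * (2 * n + 1) * Nat.centralBinom n) := by ring
      _ = 2 * ((n + 1) * Nat.centralBinom (n + 1)) := by rw [h3]
      _ = 2 * (n + 1) * Nat.centralBinom (n + 1) := by ring

private lemma catSum (N : ℕ) :
    (∑ k ∈ range N, catalan k * 4 ^ (N - k)) + 2 * Nat.centralBinom N = 2 * 4 ^ N := by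
  induction N with
  | zero => simp [Nat.centralBinom]
  | succ n ih =>
    rw [Finset.sum_range_succ]
    have hstep : ∀ k ∈ range n,
        catalan k * 4 ^ (n + 1 - k) = 4 * (catalan k * 4 ^ (n - k)) := by
      intro k hk
      have hk' : k < n := mem_range.mp hk
      have h : n + 1 - k = (n - k) + 1 := by omega
      rw [h, pow_succ]; ring
    rw [Finset.sum_congr rfl hstep, ← Finset.mul_sum]
    have h1 : n + 1 - n = 1 := by omega
    rw [h1]
    have key : 4 * catalan n + 2 * Nat.centralBinom (n + 1) = 8 * Nat.centralBinom n := by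
      apply Nat.eq_of_mul_eq_mul_left (Nat.succ_pos n)
      simp only [Nat.succ_eq_add_one]
      have hc := succ_mul_catalan_eq_centralBinom n
      have hb := Nat.succ_mul_centralBinom_succ n
      calc (n + 1) * (4 * catalan n + 2 * Nat.centralBinom (n + 1))
          = 4 * ((n + 1) * catalan n) + 2 * ((n + 1) * Nat.centralBinom (n + 1)) := by ring
        _ = 4 * Nat.centralBinom n + 2 * (2 * (2 * n + 1) * Nat.centralBinom n) := by
            rw [hc, hb]
        _ = (n + 1) * (8 * Nat.centralBinom n) := by ring
    calc 4 * ∑ k ∈ range n, catalan k * 4 ^ (n - k) + catalan n * 4 ^ 1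
          + 2 * Nat.centralBinom (n + 1)
        = 4 * ∑ k ∈ range n, catalan k * 4 ^ (n - k)
          + (4 * catalan n + 2 * Nat.centralBinom (n + 1)) := by ring
      _ = 4 * ∑ k ∈ range n, catalan k * 4 ^ (n - k) + 8 * Nat.centralBinom n := by rw [key]
      _ = 4 * ((∑ k ∈ range n, catalan k * 4 ^ (n - k)) + 2 * Nat.centralBinom n) := by ring
      _ = 4 * (2 * 4 ^ n) := by rw [ih]
      _ = 2 * 4 ^ (n + 1) := by ring

private lemma chooseSplit (k : ℕ) :
    (2 * k).choose (k + 1) + catalan k = Nat.centralBinom k := by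
  apply Nat.eq_of_mul_eq_mul_left (Nat.succ_pos k)
  simp only [Nat.succ_eq_add_one]
  have h1 : (2 * k).choose (k + 1) * (k + 1) = (2 * k).choose k * (2 * k - k) :=
    Nat.choose_succ_right_eq (2 * k) k
  have h2 : 2 * k - k = k := by omega
  have hc := succ_mul_catalan_eq_centralBinom k
  have hcb : (2 * k).choose k = Nat.centralBinom k := rfl
  calc (k + 1) * ((2 * k).choose (k + 1) + catalan k)
      = (2 * k).choose (k + 1) * (k + 1) + (k + 1) * catalan k := by ring
    _ = (2 * k).choose k * (2 * k - k) + Nat.centralBinom k := by rw [h1, hc]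
    _ = Nat.centralBinom k * k + Nat.centralBinom k := by rw [h2, hcb]
    _ = (k + 1) * Nat.centralBinom k := by ring

theorem stmt5 (p : ℕ) (hp : p.Prime) (hp2 : p ≠ 2) (a : ℕ) (ha : 0 < a) :
    (∑ k ∈ Finset.Ico 1 (p ^ a),
        (Nat.choose (2 * k) (k + 1) : ZMod (p ^ 2)) * ((4 : ZMod (p ^ 2)) ^ k)⁻¹) =
      (p : ZMod (p ^ 2)) * (if a = 1 then 1 else 0) - (4 : ZMod (p ^ 2)) ^ (p - 1) ∧
    (∑ k ∈ Finset.Ico 1 (p ^ a),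
        (catalan k : ZMod (p ^ 2)) * ((4 : ZMod (p ^ 2)) ^ k)⁻¹) =
      (2 : ZMod (p ^ 2)) ^ p - 2 := by
  haveI : Fact p.Prime := ⟨hp⟩
  set R := ZMod (p ^ 2) with hR
  have hp1 : 1 < p := hp.one_lt
  have hodd : Odd p := hp.odd_of_ne_two hp2
  -- units
  have h2u : IsUnit (2 : R) := by
    have : Nat.Coprime 2 (p ^ 2) :=
      (Nat.coprime_two_left.mpr hodd).pow_right 2
    have h := (ZMod.isUnit_iff_coprime 2 (p ^ 2)).mpr this
    simpa using h
  have h4u : IsUnit (4 : R) := by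
    have h : (4 : R) = 2 * 2 := by norm_num
    rw [h]; exact h2u.mul h2u
  set N := p ^ a with hNdef
  have hN0 : 0 < N := pow_pos hp.pos a |>.trans_le (le_refl _)
  have hpp : (p : R) * (p : R) = 0 := by
    have h : ((p ^ 2 : ℕ) : R) = 0 := ZMod.natCast_self _
    push_cast at h
    linear_combination h
  -- central binomial ≡ 2 mod p²
  have hCB : ((Nat.centralBinom N : ℕ) : R) = 2 := by
    have hvdm : Nat.centralBinom N = ∑ ij ∈ Finset.HasAntidiagonal.antidiagonal N,
        N.choose ij.1 * N.choose ij.2 := by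
      have : Nat.centralBinom N = (N + N).choose N := by
        unfold Nat.centralBinom; rw [two_mul]
      rw [this, Nat.add_choose_eq]
    rw [hvdm]
    push_cast (config := {zetaDelta := true})
    have hmem1 : ((0, N) : ℕ × ℕ) ∈ Finset.HasAntidiagonal.antidiagonal N := by simp
    have hmem2 : ((N, 0) : ℕ × ℕ) ∈ Finset.HasAntidiagonal.antidiagonal N := by simp
    have hne : ((0, N) : ℕ × ℕ) ≠ (N, 0) := by
      intro h; apply hN0.ne'; exact (Prod.mk.injEq _ _ _ _ ▸ h).1.symm
    rw [Finset.sum_eq_add_of_mem _ _ hmem1 hmem2 hne ?_]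
    · rw [show (p ^ a).choose N = 1 from Nat.choose_self N]
      norm_num
    · intro c hc hcne
      have hsum : c.1 + c.2 = N := Finset.HasAntidiagonal.mem_antidiagonal.mp hc
      have hc1 : c.1 ≠ 0 := by
        intro h; exact hcne.1 (by rw [Prod.ext_iff]; exact ⟨h, by omega⟩)
      have hc1N : c.1 ≠ N := by
        intro h; exact hcne.2 (by rw [Prod.ext_iff]; exact ⟨h, by omega⟩)
      have hc2 : c.2 ≠ 0 := by omega
      have hc2N : c.2 ≠ N := by omega
      obtain ⟨s, hs⟩ := Nat.Prime.dvd_choose_pow hp hc1 (hNdef ▸ hc1N)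
      obtain ⟨t, ht⟩ := Nat.Prime.dvd_choose_pow hp hc2 (hNdef ▸ hc2N)
      rw [hs, ht]
      push_cast (config := {zetaDelta := true})
      calc ((p : R) * s) * ((p : R) * t) = ((p : R) * (p : R)) * (s * t) := by ring
        _ = 0 := by rw [hpp]; ring
  -- Fermat-type facts
  have h2p : (p : ℤ) ∣ 2 ^ p - 2 := by
    have h : (((2 ^ p - 2 : ℤ)) : ZMod p) = 0 := by
      push_cast
      rw [ZMod.pow_card]
      ring
    exact (ZMod.intCast_zmod_eq_zero_iff_dvd _ p).mp h
  have h4p : (p : ℤ) ∣ 4 ^ p - 4 := by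
    have h : (((4 ^ p - 4 : ℤ)) : ZMod p) = 0 := by
      push_cast
      rw [ZMod.pow_card]
      ring
    exact (ZMod.intCast_zmod_eq_zero_iff_dvd _ p).mp h
  have h4pa : ((p : ℤ)) ^ 2 ∣ 4 ^ N - 4 ^ p := by
    have hfe : (p : ℤ) ∣ (4 : ℤ) ^ (p ^ (a - 1)) - 4 := by
      have h : (((4 ^ (p ^ (a - 1)) - 4 : ℤ)) : ZMod p) = 0 := by
        push_cast
        rw [ZMod.pow_card_pow]
        ring
      exact (ZMod.intCast_zmod_eq_zero_iff_dvd _ p).mp h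
    have h := dvd_sub_pow_of_dvd_sub hfe 1
    have hexp : ((4 : ℤ) ^ (p ^ (a - 1))) ^ (p ^ 1) = 4 ^ N := by
      rw [← pow_mul, pow_one]
      congr 1
      rw [hNdef, ← pow_succ]
      congr 1
      omega
    rw [hexp, pow_one] at h
    exact h
  -- transfer to R
  set u := (2 : R) ^ p with hu
  have he : (u - 2) ^ 2 = 0 := by
    obtain ⟨c, hc⟩ := h2p
    have hcR : u - 2 = (p : R) * (c : ℤ) := by
      have := congrArg (fun z : ℤ => (z : R)) hc
      push_cast (config := {zetaDelta := true}) at this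
      linear_combination this
    calc (u - 2) ^ 2 = ((p : R) * (p : R)) * ((c : ℤ) * (c : ℤ) : R) := by
          rw [hcR]; push_cast; ring
      _ = 0 := by rw [hpp]; ring
  have hq4 : (p : R) * (4 : R) ^ p = (p : R) * 4 := by
    obtain ⟨d, hd⟩ := h4p
    have hdR : (4 : R) ^ p - 4 = (p : R) * (d : ℤ) := by
      have := congrArg (fun z : ℤ => (z : R)) hd
      push_cast (config := {zetaDelta := true}) at this
      linear_combination this
    have : (p : R) * ((4 : R) ^ p - 4) = 0 := by
      rw [hdR, ← mul_assoc, hpp, zero_mul]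
    linear_combination this
  have hqN : (4 : R) ^ N = (4 : R) ^ p := by
    have h : (((4 ^ N - 4 ^ p : ℤ)) : R) = 0 := by
      rw [ZMod.intCast_zmod_eq_zero_iff_dvd]
      push_cast
      exact h4pa
    push_cast at h
    linear_combination h
  have h4p2 : (4 : R) ^ p = u ^ 2 := by
    rw [hu, ← pow_mul, show (4 : R) = 2 ^ 2 by norm_num, ← pow_mul]
    ring_nf
  -- 4^(p-1) = u - 1
  have h41 : (4 : R) ^ (p - 1) = u - 1 := by
    apply h4u.mul_right_cancel
    have hps : p - 1 + 1 = p := by omega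
    calc (4 : R) ^ (p - 1) * 4 = (4 : R) ^ p := by rw [← pow_succ, hps]
      _ = u ^ 2 := h4p2
      _ = (u - 1) * 4 := by linear_combination he
  -- sum manipulations
  set q := (4 : R) ^ N with hqdef
  have hqu : IsUnit q := h4u.pow N
  have hqk : ∀ k, k < N → q * ((4 : R) ^ k)⁻¹ = (4 : R) ^ (N - k) := by
    intro k hk
    have h : N - k + k = N := by omega
    calc q * ((4 : R) ^ k)⁻¹
        = (4 : R) ^ (N - k) * ((4 : R) ^ k * ((4 : R) ^ k)⁻¹) := by
          rw [← mul_assoc, ← pow_add, h]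
      _ = (4 : R) ^ (N - k) := by rw [ZMod.mul_inv_of_unit _ (h4u.pow k), mul_one]
  -- cast of cbSum
  have hS1cast : ∑ k ∈ range N, ((2 * k).choose k : R) * (4 : R) ^ (N - k)
      = 2 * (N : R) * ((Nat.centralBinom N : ℕ) : R) := by
    have := congrArg (fun z : ℕ => (z : R)) (cbSum N)
    push_cast (config := {zetaDelta := true}) at this
    convert this using 2 <;> push_cast (config := {zetaDelta := true}) <;> ring
  have hS2cast : (∑ k ∈ range N, (catalan k : R) * (4 : R) ^ (N - k))
      + 2 * ((Nat.centralBinom N : ℕ) : R) = 2 * q := by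
    have := congrArg (fun z : ℕ => (z : R)) (catSum N)
    push_cast (config := {zetaDelta := true}) at this
    rw [hqdef]
    convert this using 2 <;> push_cast (config := {zetaDelta := true}) <;> ring
  -- split off k = 0
  have hsplit1 : ∑ k ∈ range N, ((2 * k).choose k : R) * (4 : R) ^ (N - k)
      = q + ∑ k ∈ Ico 1 N, ((2 * k).choose k : R) * (4 : R) ^ (N - k) := by
    rw [Finset.range_eq_Ico, Finset.sum_eq_sum_Ico_succ_bot hN0]
    simp [hqdef]
  have hsplit2 : ∑ k ∈ range N, (catalan k : R) * (4 : R) ^ (N - k)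
      = q + ∑ k ∈ Ico 1 N, (catalan k : R) * (4 : R) ^ (N - k) := by
    rw [Finset.range_eq_Ico, Finset.sum_eq_sum_Ico_succ_bot hN0]
    simp [hqdef, catalan_zero]
  -- q * S = transformed sums
  have hqS1 : q * (∑ k ∈ Ico 1 N, ((2 * k).choose k : R) * ((4 : R) ^ k)⁻¹)
      = 2 * (N : R) * 2 - q := by
    rw [Finset.mul_sum]
    have hterm : ∀ k ∈ Ico 1 N,
        q * (((2 * k).choose k : R) * ((4 : R) ^ k)⁻¹)
          = ((2 * k).choose k : R) * (4 : R) ^ (N - k) := by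
      intro k hk
      have hkN : k < N := (Finset.mem_Ico.mp hk).2
      rw [mul_comm q, mul_assoc, mul_comm ((4 : R) ^ k)⁻¹ q, hqk k hkN]
    rw [Finset.sum_congr rfl hterm]
    have h := hS1cast
    rw [hsplit1, hCB] at h
    linear_combination h
  have hqS2 : q * (∑ k ∈ Ico 1 N, (catalan k : R) * ((4 : R) ^ k)⁻¹)
      = q - 4 := by
    rw [Finset.mul_sum]
    have hterm : ∀ k ∈ Ico 1 N,
        q * ((catalan k : R) * ((4 : R) ^ k)⁻¹)
          = (catalan k : R) * (4 : R) ^ (N - k) := by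
      intro k hk
      have hkN : k < N := (Finset.mem_Ico.mp hk).2
      rw [mul_comm q, mul_assoc, mul_comm ((4 : R) ^ k)⁻¹ q, hqk k hkN]
    rw [Finset.sum_congr rfl hterm]
    have h := hS2cast
    rw [hsplit2, hCB] at h
    linear_combination h
  -- value of S2
  have hS2 : (∑ k ∈ Ico 1 N, (catalan k : R) * ((4 : R) ^ k)⁻¹) = u - 2 := by
    apply hqu.mul_left_cancel
    rw [hqS2, hqN, h4p2]
    linear_combination (-(u + 1)) * he
  -- value of S1
  have hS1 : (∑ k ∈ Ico 1 N, ((2 * k).choose k : R) * ((4 : R) ^ k)⁻¹)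
      = (p : R) * (if a = 1 then 1 else 0) - 1 := by
    apply hqu.mul_left_cancel
    rw [hqS1]
    by_cases h1 : a = 1
    · subst h1
      rw [if_pos rfl, mul_one]
      have hNp : (N : R) = (p : R) := by rw [hNdef, pow_one]
      rw [hNp]
      have hqp : q * (p : R) = 4 * (p : R) := by
        calc q * (p : R) = (p : R) * (4 : R) ^ p := by rw [hqN]; ring
          _ = (p : R) * 4 := hq4
          _ = 4 * (p : R) := by ring
      linear_combination -hqp
    · have hNz : (N : R) = 0 := by
        have : p ^ 2 ∣ N := by
          rw [hNdef]
          exact pow_dvd_pow p (by omega)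
        exact (ZMod.natCast_eq_zero_iff _ _).mpr this
      rw [if_neg h1, hNz]
      ring
  -- S3 = S1 - S2
  have hS3 : (∑ k ∈ Ico 1 N, ((2 * k).choose (k + 1) : R) * ((4 : R) ^ k)⁻¹)
      = (∑ k ∈ Ico 1 N, ((2 * k).choose k : R) * ((4 : R) ^ k)⁻¹)
        - (∑ k ∈ Ico 1 N, (catalan k : R) * ((4 : R) ^ k)⁻¹) := by
    rw [← Finset.sum_sub_distrib]
    apply Finset.sum_congr rfl
    intro k _
    have h := congrArg (fun z : ℕ => (z : R)) (chooseSplit k)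
    push_cast at h
    have hcb : ((Nat.centralBinom k : ℕ) : R) = (((2 * k).choose k : ℕ) : R) := rfl
    rw [hcb] at h
    have : ((2 * k).choose (k + 1) : R) = ((2 * k).choose k : R) - (catalan k : R) := by
      linear_combination h
    rw [this]
    ring
  constructor
  · rw [hS3, hS1, hS2, h41]
    ring
  · exact hS2
end

section
/- Let p be a prime and let a, m be integers with a > 0 and p ∤ m. Then ∑_{k=1}^{p^a-1} binom(2k,k+1)/m^k + (m^{p-1} - 1) ≡ ((m-2)/2)·∑_{k=1}^{p^a-1} binom(2k,k)/m^k + p·δ_{p,2} (mod p²), where δ_{p,2} equals 1 if p = 2 and 0 otherwise, and the congruence between rational numbers means that the p-adic valuation of the difference of the two sides is at least 2. -/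
open Finset

lemma central_rec (n : ℕ) : (2*(n+1)).choose (n+1) = 2 * ((2*n).choose (n+1) + (2*n).choose n) := by
  have h1 : 2*(n+1) = (2*n+1)+1 := by ring
  have h2 : (2*n+1).choose n = (2*n+1).choose (n+1) := by
    have := Nat.choose_symm (n := 2*n+1) (k := n+1) (by omega)
    simpa [show 2*n+1-(n+1) = n from by omega] using this
  have h3 : (2*n+1).choose (n+1) = (2*n).choose n + (2*n).choose (n+1) :=
    Nat.choose_succ_succ' (2*n) n
  have h4 : (2*(n+1)).choose (n+1) = (2*n+1).choose n + (2*n+1).choose (n+1) := by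
    rw [h1, Nat.choose_succ_succ']
  omega

lemma key_identity (m : ℚ) (hm : m ≠ 0) (n : ℕ) (hn : 1 ≤ n) :
    (∑ k ∈ Ico 1 n, ((2*k).choose (k+1) : ℚ)/m^k)
      = (m-2)/2 * (∑ k ∈ Ico 1 n, ((2*k).choose k : ℚ)/m^k)
        + ((2*n).choose n : ℚ)/(2*m^(n-1)) - 1 := by
  induction n, hn using Nat.le_induction with
  | base => simp
  | succ n hn ih =>
    rw [Finset.sum_Ico_succ_top (by omega), Finset.sum_Ico_succ_top (by omega), ih]
    have hc : ((2*(n+1)).choose (n+1) : ℚ) = 2 * (((2*n).choose (n+1) : ℚ) + ((2*n).choose n : ℚ)) := by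
      exact_mod_cast congrArg (Nat.cast : ℕ → ℚ) (central_rec n)
    have hn1 : n - 1 + 1 = n := by omega
    have hpow : m ^ n = m ^ (n-1) * m := by
      rw [← pow_succ, hn1]
    rw [hc, Nat.add_sub_cancel, hpow]
    have hmn : m ^ (n-1) ≠ 0 := pow_ne_zero _ hm
    field_simp
    ring

lemma central_sq (n : ℕ) : (2*n).choose n = ∑ k ∈ range (n+1), (n.choose k)^2 := by
  have := Nat.add_choose_eq n n n
  rw [two_mul, this, Finset.Nat.sum_antidiagonal_eq_sum_range_succ_mk]
  refine Finset.sum_congr rfl fun k hk => ?_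
  rw [Nat.choose_symm (Finset.mem_range_succ_iff.mp hk), sq]

lemma central_sub_two (n : ℕ) (hn : 1 ≤ n) :
    ((2*n).choose n : ℤ) - 2 = ∑ k ∈ Ico 1 n, ((n.choose k : ℤ))^2 := by
  have h := central_sq n
  have : ((2*n).choose n : ℤ) = ∑ k ∈ range (n+1), ((n.choose k : ℤ))^2 := by
    exact_mod_cast congrArg (Nat.cast : ℕ → ℤ) h
  rw [this, range_eq_Ico, Finset.sum_eq_sum_Ico_succ_bot (by omega),
    Finset.sum_Ico_succ_top (by omega)]
  push_cast
  simp
  ring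

lemma odd_central (p a : ℕ) (hp : p.Prime) (_ : 1 ≤ a) :
    (p:ℤ)^2 ∣ ((2*p^a).choose (p^a) : ℤ) - 2 := by
  have hn : 1 ≤ p ^ a := Nat.one_le_pow _ _ hp.pos
  rw [central_sub_two _ hn]
  refine Finset.dvd_sum fun k hk => ?_
  rw [Finset.mem_Ico] at hk
  have hd : p ∣ (p^a).choose k :=
    hp.dvd_choose_pow (by omega) (by omega)
  have : (p:ℤ) ∣ ((p^a).choose k : ℤ) := Int.natCast_dvd_natCast.mpr hd
  exact pow_dvd_pow_of_dvd this 2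

lemma two_central (a : ℕ) (ha : 1 ≤ a) :
    (8:ℤ) ∣ ((2*2^a).choose (2^a) : ℤ) - 6 := by
  have hn : 1 ≤ 2 ^ a := Nat.one_le_two_pow
  have hmem : 2^(a-1) ∈ Ico 1 (2^a) := by
    rw [Finset.mem_Ico]
    constructor
    · exact Nat.one_le_two_pow
    · exact Nat.pow_lt_pow_right one_lt_two (by omega)
  have hsplit := Finset.add_sum_erase _ (fun k => ((2^a).choose k : ℤ)^2) hmem
  have key : ((2*2^a).choose (2^a) : ℤ) - 2
      = ((2^a).choose (2^(a-1)) : ℤ)^2 + ∑ k ∈ (Ico 1 (2^a)).erase (2^(a-1)), ((2^a).choose k : ℤ)^2 := by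
    rw [central_sub_two _ hn, ← hsplit]
  have hmul : emultiplicity 2 ((2^a).choose (2^(a-1))) = (1 : ℕ) := by
    rw [Nat.Prime.emultiplicity_choose_prime_pow Nat.prime_two
      (le_of_lt (Nat.pow_lt_pow_right one_lt_two (by omega))) (by positivity)]
    rw [multiplicity_pow_self_of_prime Nat.prime_two.prime]
    congr 1
    omega
  have h2d : 2 ∣ (2^a).choose (2^(a-1)) ∧ ¬ 2^2 ∣ (2^a).choose (2^(a-1)) := by
    have := (emultiplicity_eq_coe).mp hmul
    simpa using this
  obtain ⟨u, hu⟩ := h2d.1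
  have hodd : ¬ 2 ∣ u := by
    intro ⟨v, hv⟩
    exact h2d.2 ⟨v, by rw [hu, hv]; ring⟩
  have hC2 : (8:ℤ) ∣ ((2^a).choose (2^(a-1)) : ℤ)^2 - 4 := by
    have hu' : ((2^a).choose (2^(a-1)) : ℤ) = 2 * u := by exact_mod_cast hu
    obtain ⟨w, hw⟩ : ∃ w : ℤ, (u:ℤ) = 2*w + 1 := ⟨(u-1)/2, by omega⟩
    rw [hu', hw]
    exact ⟨2*w^2 + 2*w, by ring⟩
  have hrest : ∀ k ∈ (Ico 1 (2^a)).erase (2^(a-1)), (8:ℤ) ∣ ((2^a).choose k : ℤ)^2 := by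
    intro k hk
    rw [Finset.mem_erase, Finset.mem_Ico] at hk
    obtain ⟨hne, hk1, hk2⟩ := hk
    have ha2 : 2 ≤ a := by
      by_contra h'
      have haa : a = 1 := by omega
      subst haa
      simp only [pow_one, pow_zero] at hk1 hk2 hne
      omega
    have hmult : multiplicity 2 k ≤ a - 2 := by
      by_contra h
      push_neg at h
      have hdvd : 2^(a-1) ∣ k := dvd_trans (pow_dvd_pow 2 (by omega)) (pow_multiplicity_dvd 2 k)
      obtain ⟨t, ht⟩ := hdvd
      have h2a : 2^a = 2^(a-1) * 2 := by
        rw [← pow_succ]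
        congr 1
        omega
      have ht1 : 1 ≤ t := by
        rcases Nat.eq_zero_or_pos t with h0 | h0
        · subst h0
          rw [mul_zero] at ht
          omega
        · exact h0
      have ht2 : t < 2 := by
        rw [ht, h2a] at hk2
        exact Nat.lt_of_mul_lt_mul_left hk2
      have : t = 1 := by omega
      rw [this, mul_one] at ht
      exact hne ht
    have hle : (2:ℕ∞) ≤ emultiplicity 2 ((2^a).choose k) := by
      rw [Nat.Prime.emultiplicity_choose_prime_pow Nat.prime_two (by omega) (by omega)]
      exact_mod_cast Nat.le_sub_of_add_le (by omega)
    have h4 : 2^2 ∣ (2^a).choose k := pow_dvd_of_le_emultiplicity hle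
    have : (4:ℤ) ∣ ((2^a).choose k : ℤ) := by exact_mod_cast Int.natCast_dvd_natCast.mpr h4
    obtain ⟨c, hc⟩ := this
    exact ⟨2*c^2, by rw [hc]; ring⟩
  have hsum : (8:ℤ) ∣ ∑ k ∈ (Ico 1 (2^a)).erase (2^(a-1)), ((2^a).choose k : ℤ)^2 :=
    Finset.dvd_sum hrest
  have hfin : ((2*2^a).choose (2^a) : ℤ) - 6 = (((2^a).choose (2^(a-1)) : ℤ)^2 - 4) + ∑ k ∈ (Ico 1 (2^a)).erase (2^(a-1)), ((2^a).choose k : ℤ)^2 := by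
    linarith [key]
  rw [hfin]
  exact dvd_add hC2 hsum

lemma fermat_pow (p : ℕ) (hp : p.Prime) (m : ℤ) (hm : ¬(p:ℤ) ∣ m) (b : ℕ) (hb : (p-1) ∣ b) :
    (p:ℤ) ∣ m^b - 1 := by
  haveI := Fact.mk hp
  obtain ⟨t, rfl⟩ := hb
  have hm0 : (m : ZMod p) ≠ 0 := by
    rwa [Ne, ZMod.intCast_zmod_eq_zero_iff_dvd]
  have h1 : (m : ZMod p)^(p-1) = 1 := ZMod.pow_card_sub_one_eq_one hm0
  rw [← ZMod.intCast_zmod_eq_zero_iff_dvd]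
  push_cast
  rw [pow_mul, h1, one_pow, sub_self]

lemma lift_pow (p a : ℕ) (hp : p.Prime) (ha : 1 ≤ a) (m : ℤ) (hm : ¬(p:ℤ) ∣ m) :
    (p:ℤ)^2 ∣ m^(p^a - 1) - m^(p-1) := by
  set x : ℤ := m^(p^(a-1) - 1) with hx
  have hdvd1 : (p:ℤ) ∣ x - 1 :=
    fermat_pow p hp m hm _ (by simpa using Nat.sub_dvd_pow_sub_pow p 1 (a-1))
  have hdvd2 : (p:ℤ)^2 ∣ x^p - 1 := by
    have := dvd_sub_pow_of_dvd_sub (p := p) (a := x) (b := 1) hdvd1 1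
    simpa using this
  have hq1 : 1 ≤ p^(a-1) := Nat.one_le_pow _ _ hp.pos
  have hle : p ≤ p^(a-1) * p := Nat.le_mul_of_pos_left p hq1
  have hp1 : 1 ≤ p := hp.pos
  have e : (p-1) + (p^(a-1)-1)*p = p^a - 1 := by
    have hq : p^a = p^(a-1) * p := by
      rw [← pow_succ]
      congr 1
      omega
    have h2 : (p^(a-1)-1)*p = p^(a-1)*p - p := by
      rw [Nat.sub_mul, one_mul]
    rw [hq, h2]
    omega
  have key : m^(p-1) * x^p = m^(p^a - 1) := by
    rw [hx, ← pow_mul, ← pow_add, e]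
  have key2 : m^(p^a - 1) - m^(p-1) = m^(p-1) * (x^p - 1) := by
    rw [mul_sub, key, mul_one]
  rw [key2]
  exact Dvd.dvd.mul_left hdvd2 _

theorem stmt15 (p : ℕ) (hp : p.Prime) (a : ℕ) (ha : 0 < a)
    (m : ℤ) (hm : ¬ (p : ℤ) ∣ m)
    (L R : ℚ)
    (hL : L = (∑ k ∈ Finset.Ico 1 (p ^ a),
        (Nat.choose (2 * k) (k + 1) : ℚ) / (m : ℚ) ^ k) + ((m : ℚ) ^ (p - 1) - 1))
    (hR : R = ((m : ℚ) - 2) / 2 *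
        (∑ k ∈ Finset.Ico 1 (p ^ a), (Nat.choose (2 * k) k : ℚ) / (m : ℚ) ^ k) +
        (p : ℚ) * (if p = 2 then 1 else 0)) :
    L = R ∨ 2 ≤ padicValRat p (L - R) := by
  haveI := Fact.mk hp
  have hm0 : m ≠ 0 := by rintro rfl; exact hm (dvd_zero _)
  have hmQ : (m:ℚ) ≠ 0 := Int.cast_ne_zero.mpr hm0
  have hn1 : 1 ≤ p ^ a := Nat.one_le_pow _ _ hp.pos
  set n := p ^ a with hn
  set c : ℤ := if p = 2 then 2 else 0 with hc
  set N : ℤ := ((2*n).choose n : ℤ) + 2*m^(n-1)*(m^(p-1) - 2 - c) with hN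
  have hid := key_identity (m:ℚ) hmQ n hn1
  have hLR : L - R = (N:ℚ) / (2*(m:ℚ)^(n-1)) := by
    have hcQ : (p:ℚ) * (if p = 2 then (1:ℚ) else 0) = (c:ℚ) := by
      rw [hc]
      split_ifs with h
      · rw [h]; norm_num
      · norm_num
    rw [hL, hR, hid, hcQ, hN]
    have hmn : ((m:ℚ))^(n-1) ≠ 0 := pow_ne_zero _ hmQ
    push_cast
    field_simp
    ring
  have hD : (2*(m:ℚ)^(n-1)) ≠ 0 := mul_ne_zero two_ne_zero (pow_ne_zero _ hmQ)
  by_cases hN0 : N = 0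
  · left
    have : L - R = 0 := by rw [hLR, hN0]; simp
    exact sub_eq_zero.mp this
  · right
    -- divisibility of N
    have hdvd : (p:ℤ)^(2 + if p = 2 then 1 else 0) ∣ N := by
      by_cases h2 : p = 2
      · subst h2
        have d1 := two_central a ha
        have hmm : m^(n-1)*m = m^n := by
          rw [← pow_succ]
          congr 1
          omega
        have hsq : (8:ℤ) ∣ m^2 - 1 := by
          have hodd : Odd m := Int.not_even_iff_odd.mp (by
            intro he
            exact hm (by simpa using he.two_dvd))
          obtain ⟨t, ht⟩ := hodd
          obtain ⟨s, hs⟩ := Int.even_mul_succ_self t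
          exact ⟨s, by rw [ht]; linear_combination 4*hs⟩
        have hpow : m^n = (m^2)^(2^(a-1)) := by
          rw [← pow_mul]
          congr 1
          rw [hn, ← pow_succ']
          congr 1
          omega
        have d2 : (8:ℤ) ∣ 2*(m^(n-1)*m - 1) := by
          have h4 : (4:ℤ) ∣ m^n - 1 := by
            have : (m^2 - 1 : ℤ) ∣ (m^2)^(2^(a-1)) - 1 := by
              simpa using sub_dvd_pow_sub_pow (m^2) 1 (2^(a-1))
            have h8 : (8:ℤ) ∣ m^n - 1 := by
              rw [hpow]
              exact dvd_trans hsq this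
            exact dvd_trans (by norm_num) h8
          rw [hmm]
          have := mul_dvd_mul_left (2:ℤ) h4
          simpa using this
        have d3 : (8:ℤ) ∣ 8 - 8*m^(n-1) := ⟨1 - m^(n-1), by ring⟩
        have dec : N = (((2*n).choose n : ℤ) - 6) + 2*(m^(n-1)*m - 1) + (8 - 8*m^(n-1)) := by
          rw [hN, hc]
          norm_num
          ring
        have hexp : ((2:ℕ):ℤ) ^ (2 + if (2:ℕ) = 2 then 1 else 0) = 8 := by norm_num
        rw [hexp, dec, hn]
        exact dvd_add (dvd_add d1 d2) d3
      · simp only [if_neg h2, add_zero]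
        have d1 := odd_central p a hp ha
        have d2 := lift_pow p a hp ha m hm
        have d3 : (p:ℤ)^2 ∣ 2*(m^(p-1)-1)^2 := by
          have h1 : (p:ℤ) ∣ m^(p-1) - 1 := fermat_pow p hp m hm (p-1) dvd_rfl
          exact Dvd.dvd.mul_left (pow_dvd_pow_of_dvd h1 2) 2
        have dec : N = (((2*n).choose n : ℤ) - 2)
            + 2*(m^(n-1) - m^(p-1))*(m^(p-1)-2) + 2*(m^(p-1)-1)^2 := by
          rw [hN, hc, if_neg h2]
          ring
        have hne : n - 1 = p^a - 1 := by rw [hn]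
        rw [dec, hn]
        refine dvd_add (dvd_add d1 ?_) d3
        have : (p:ℤ)^2 ∣ 2*(m^(p^a-1) - m^(p-1)) := Dvd.dvd.mul_left d2 2
        exact Dvd.dvd.mul_right this _
    -- valuation computation
    have hNQ : (N:ℚ) ≠ 0 := Int.cast_ne_zero.mpr hN0
    have hval2 : padicValRat p ((m:ℚ)^(n-1)) = 0 := by
      rw [padicValRat.pow (m:ℚ)]
      have : padicValRat p (m:ℚ) = 0 := by
        rw [padicValRat.of_int, padicValInt.eq_zero_of_not_dvd hm]
        norm_num
      rw [this, mul_zero]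
    have hval3 : padicValRat p (2:ℚ) = (if p = 2 then 1 else 0 : ℕ) := by
      by_cases h2 : p = 2
      · subst h2
        simp only [if_pos rfl, Nat.cast_one]
        simpa using padicValRat.self (p := 2) one_lt_two
      · simp only [if_neg h2, Nat.cast_zero]
        have : ¬ (p:ℤ) ∣ (2:ℤ) := by
          intro hdd
          have : p ∣ 2 := by exact_mod_cast hdd
          exact h2 ((Nat.prime_dvd_prime_iff_eq hp Nat.prime_two).mp this)
        have h22 : ((2:ℤ):ℚ) = (2:ℚ) := by norm_num
        rw [← h22, padicValRat.of_int, padicValInt.eq_zero_of_not_dvd this]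
        norm_num
    have hvalN : (2 + (if p = 2 then 1 else 0) : ℕ) ≤ padicValInt p N := by
      rcases (padicValInt_dvd_iff _ N).mp hdvd with h | h
      · exact absurd h hN0
      · exact h
    rw [hLR, padicValRat.div hNQ hD, padicValRat.mul two_ne_zero (pow_ne_zero _ hmQ),
      hval2, hval3, padicValRat.of_int, add_zero]
    by_cases h2 : p = 2
    · simp only [h2, if_pos rfl] at hvalN ⊢
      omega
    · simp only [if_neg h2] at hvalN ⊢
      omega
end

section
/- Let p be a prime, let a be a positive integer, and let A, B be integers, with Δ = A² - 4B. Then v_{p^a}(A,B) ≡ v_{p^{a-1}}(A,B) (mod p^a). If moreover p is odd, then u_{p^a}(A,B) ≡ (Δ/p)·u_{p^{a-1}}(A,B) (mod p^a), where (Δ/p) is the Legendre symbol. -/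
/-- The Lucas sequence `u_n(A,B)` with `u_0 = 0`, `u_1 = 1`,
`u_{n+1} = A u_n - B u_{n-1}`. -/
def lucasU (A B : ℤ) : ℕ → ℤ
  | 0 => 0
  | 1 => 1
  | n + 2 => A * lucasU A B (n + 1) - B * lucasU A B n

/-- The Lucas sequence `v_n(A,B)` with `v_0 = 2`, `v_1 = A`,
`v_{n+1} = A v_n - B v_{n-1}`. -/
def lucasV (A B : ℤ) : ℕ → ℤ
  | 0 => 2
  | 1 => A
  | n + 2 => A * lucasV A B (n + 1) - B * lucasV A B n

set_option linter.unusedSectionVars false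

namespace Stmt17Aux

/-- Generic Lucas U sequence over a commutative ring. -/
def uSeq {R : Type*} [CommRing R] (A B : R) : ℕ → R
  | 0 => 0
  | 1 => 1
  | n + 2 => A * uSeq A B (n + 1) - B * uSeq A B n

/-- Generic Lucas V sequence over a commutative ring. -/
def vSeq {R : Type*} [CommRing R] (A B : R) : ℕ → R
  | 0 => 2
  | 1 => A
  | n + 2 => A * vSeq A B (n + 1) - B * vSeq A B n

section maps
variable {R S : Type*} [CommRing R] [CommRing S]

lemma map_uSeq (φ : R →+* S) (A B : R) : ∀ n, φ (uSeq A B n) = uSeq (φ A) (φ B) n := by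
  have key : ∀ n, φ (uSeq A B n) = uSeq (φ A) (φ B) n ∧
      φ (uSeq A B (n+1)) = uSeq (φ A) (φ B) (n+1) := by
    intro n
    induction n with
    | zero => simp [uSeq]
    | succ n ih => exact ⟨ih.2, by simp [uSeq, ih.1, ih.2]⟩
  exact fun n => (key n).1

lemma map_vSeq (φ : R →+* S) (A B : R) : ∀ n, φ (vSeq A B n) = vSeq (φ A) (φ B) n := by
  have key : ∀ n, φ (vSeq A B n) = vSeq (φ A) (φ B) n ∧
      φ (vSeq A B (n+1)) = vSeq (φ A) (φ B) (n+1) := by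
    intro n
    induction n with
    | zero => refine ⟨?_, by simp [vSeq]⟩; simpa [vSeq] using map_ofNat φ 2
    | succ n ih => exact ⟨ih.2, by simp [vSeq, ih.1, ih.2]⟩
  exact fun n => (key n).1

/-- If `x + y = s` and `x * y = q` then `vSeq s q n = x^n + y^n` and
`(x - y) * uSeq s q n = x^n - y^n`. -/
lemma roots_spec {R : Type*} [CommRing R] (x y : R) :
    ∀ n, vSeq (x + y) (x * y) n = x ^ n + y ^ n ∧
      (x - y) * uSeq (x + y) (x * y) n = x ^ n - y ^ n := by
  have key : ∀ n, (vSeq (x+y) (x*y) n = x ^ n + y ^ n ∧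
      (x - y) * uSeq (x+y) (x*y) n = x ^ n - y ^ n) ∧
      (vSeq (x+y) (x*y) (n+1) = x ^ (n+1) + y ^ (n+1) ∧
      (x - y) * uSeq (x+y) (x*y) (n+1) = x ^ (n+1) - y ^ (n+1)) := by
    intro n
    induction n with
    | zero => refine ⟨⟨by simp [vSeq]; ring, by simp [uSeq]⟩, ⟨by simp [vSeq], by simp [uSeq]⟩⟩
    | succ n ih =>
      refine ⟨ih.2, ?_, ?_⟩
      · show (x+y) * vSeq (x+y) (x*y) (n+1) - (x*y) * vSeq (x+y) (x*y) n = _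
        rw [ih.1.1, ih.2.1]; ring
      · show (x - y) * ((x+y) * uSeq (x+y) (x*y) (n+1) - (x*y) * uSeq (x+y) (x*y) n) = _
        have h1 := ih.1.2
        have h2 := ih.2.2
        calc (x - y) * ((x+y) * uSeq (x+y) (x*y) (n+1) - (x*y) * uSeq (x+y) (x*y) n)
            = (x+y) * ((x-y) * uSeq (x+y) (x*y) (n+1)) - (x*y) * ((x-y) * uSeq (x+y) (x*y) n) := by ring
          _ = (x+y) * (x ^ (n+1) - y ^ (n+1)) - (x*y) * (x ^ n - y ^ n) := by rw [h1, h2]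
          _ = x ^ (n+2) - y ^ (n+2) := by ring
  exact fun n => (key n).1

end maps

/-- The ring `C[x]/(x² - A x + B)` realized concretely as pairs. -/
structure PR (C : Type*) (A B : C) where
  u : C
  v : C

namespace PR

variable {C : Type*} [CommRing C] {A B : C}

@[ext] theorem ext {x y : PR C A B} (h1 : x.u = y.u) (h2 : x.v = y.v) : x = y := by
  cases x; cases y; simp_all

instance : Zero (PR C A B) := ⟨⟨0, 0⟩⟩
instance : One (PR C A B) := ⟨⟨1, 0⟩⟩
instance : Add (PR C A B) := ⟨fun x y => ⟨x.u + y.u, x.v + y.v⟩⟩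
instance : Neg (PR C A B) := ⟨fun x => ⟨-x.u, -x.v⟩⟩
instance : Mul (PR C A B) := ⟨fun x y =>
  ⟨x.u * y.u - B * x.v * y.v, x.u * y.v + x.v * y.u + A * x.v * y.v⟩⟩

@[simp] lemma zero_u : (0 : PR C A B).u = 0 := rfl
@[simp] lemma zero_v : (0 : PR C A B).v = 0 := rfl
@[simp] lemma one_u : (1 : PR C A B).u = 1 := rfl
@[simp] lemma one_v : (1 : PR C A B).v = 0 := rfl
@[simp] lemma add_u (x y : PR C A B) : (x + y).u = x.u + y.u := rfl
@[simp] lemma add_v (x y : PR C A B) : (x + y).v = x.v + y.v := rfl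
@[simp] lemma neg_u (x : PR C A B) : (-x).u = -x.u := rfl
@[simp] lemma neg_v (x : PR C A B) : (-x).v = -x.v := rfl
@[simp] lemma mul_u (x y : PR C A B) : (x * y).u = x.u * y.u - B * x.v * y.v := rfl
@[simp] lemma mul_v (x y : PR C A B) : (x * y).v = x.u * y.v + x.v * y.u + A * x.v * y.v := rfl

instance : CommRing (PR C A B) where
  add := (· + ·)
  add_assoc x y z := by ext <;> simp <;> ring
  zero := 0
  zero_add x := by ext <;> simp
  add_zero x := by ext <;> simp
  add_comm x y := by ext <;> simp <;> ring
  neg := Neg.neg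
  nsmul := fun n x => ⟨n • x.u, n • x.v⟩
  nsmul_zero := fun x => by ext <;> exact zero_smul _ _
  nsmul_succ := fun n x => by ext <;> exact succ_nsmul _ _
  zsmul := fun n x => ⟨n • x.u, n • x.v⟩
  zsmul_zero' := fun x => by ext <;> exact zero_smul _ _
  zsmul_succ' := fun n x => PR.ext
    (show ((n.succ : ℕ) : ℤ) • x.u = (n : ℤ) • x.u + x.u by rw [Nat.cast_succ, add_one_zsmul])
    (show ((n.succ : ℕ) : ℤ) • x.v = (n : ℤ) • x.v + x.v by rw [Nat.cast_succ, add_one_zsmul])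
  zsmul_neg' := fun n x => PR.ext
    (show Int.negSucc n • x.u = -(((n.succ : ℕ) : ℤ) • x.u) by rw [negSucc_zsmul, natCast_zsmul])
    (show Int.negSucc n • x.v = -(((n.succ : ℕ) : ℤ) • x.v) by rw [negSucc_zsmul, natCast_zsmul])
  neg_add_cancel x := by ext <;> simp
  mul := (· * ·)
  left_distrib x y z := by ext <;> simp <;> ring
  right_distrib x y z := by ext <;> simp <;> ring
  zero_mul x := by ext <;> simp
  mul_zero x := by ext <;> simp
  mul_assoc x y z := by ext <;> simp <;> ring
  one := 1
  one_mul x := by ext <;> simp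
  mul_one x := by ext <;> simp
  mul_comm x y := by ext <;> simp <;> ring

/-- The canonical embedding `C →+* PR C A B`. -/
def ι : C →+* PR C A B where
  toFun c := ⟨c, 0⟩
  map_one' := by ext <;> simp
  map_mul' x y := by ext <;> simp
  map_zero' := by ext <;> simp
  map_add' x y := by ext <;> simp

@[simp] lemma ι_u (c : C) : (ι (A := A) (B := B) c).u = c := rfl
@[simp] lemma ι_v (c : C) : (ι (A := A) (B := B) c).v = 0 := rfl

lemma ι_injective : Function.Injective (ι (A := A) (B := B)) := by
  intro x y h
  simpa using congrArg PR.u h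

lemma natCast_eq (n : ℕ) : ((n : ℕ) : PR C A B) = ι (n : C) :=
  (map_natCast (ι (A := A) (B := B)) n).symm
lemma intCast_eq (z : ℤ) : ((z : ℤ) : PR C A B) = ι (z : C) :=
  (map_intCast (ι (A := A) (B := B)) z).symm

@[simp] lemma natCast_u (n : ℕ) : ((n : ℕ) : PR C A B).u = (n : C) := by
  rw [natCast_eq, ι_u]
@[simp] lemma natCast_v (n : ℕ) : ((n : ℕ) : PR C A B).v = 0 := by
  rw [natCast_eq, ι_v]
@[simp] lemma intCast_u (z : ℤ) : ((z : ℤ) : PR C A B).u = (z : C) := by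
  rw [intCast_eq, ι_u]
@[simp] lemma intCast_v (z : ℤ) : ((z : ℤ) : PR C A B).v = 0 := by
  rw [intCast_eq, ι_v]
@[simp] lemma ofNat_u (n : ℕ) [n.AtLeastTwo] :
    (no_index (OfNat.ofNat n) : PR C A B).u = OfNat.ofNat n := by
  rw [show (OfNat.ofNat n : PR C A B) = ((OfNat.ofNat n : ℕ) : PR C A B) from
    (Nat.cast_ofNat).symm, natCast_eq, ι_u, Nat.cast_ofNat]
@[simp] lemma ofNat_v (n : ℕ) [n.AtLeastTwo] :
    (no_index (OfNat.ofNat n) : PR C A B).v = 0 := by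
  rw [show (OfNat.ofNat n : PR C A B) = ((OfNat.ofNat n : ℕ) : PR C A B) from
    (Nat.cast_ofNat).symm, natCast_eq, ι_v]

/-- The root `x` of `x² = A x - B`. -/
def rt : PR C A B := ⟨0, 1⟩

/-- The conjugate root. -/
def rt' : PR C A B := ⟨A, -1⟩

@[simp] lemma rt_u : (rt : PR C A B).u = 0 := rfl
@[simp] lemma rt_v : (rt : PR C A B).v = 1 := rfl
@[simp] lemma rt'_u : (rt' : PR C A B).u = A := rfl
@[simp] lemma rt'_v : (rt' : PR C A B).v = -1 := rfl

@[simp] lemma sub_u (x y : PR C A B) : (x - y).u = x.u - y.u := by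
  rw [sub_eq_add_neg, add_u, neg_u, ← sub_eq_add_neg]
@[simp] lemma sub_v (x y : PR C A B) : (x - y).v = x.v - y.v := by
  rw [sub_eq_add_neg, add_v, neg_v, ← sub_eq_add_neg]

lemma rt_add_rt' : (rt : PR C A B) + rt' = ι A := by ext <;> simp
lemma rt_mul_rt' : (rt : PR C A B) * rt' = ι B := by ext <;> simp
lemma rt_sub_rt'_sq : ((rt : PR C A B) - rt') ^ 2 = ι A ^ 2 - 4 * ι B := by
  ext <;> simp [pow_two, sub_eq_add_neg] <;> ring


lemma ι_eq_zero {c : C} : (ι c : PR C A B) = 0 ↔ c = 0 :=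
  ⟨fun h => ι_injective (by simpa using h), fun h => by simp [h, map_zero]⟩

lemma ι_dvd_ι {c d : C} (h : (ι c : PR C A B) ∣ ι d) : c ∣ d := by
  obtain ⟨w, hw⟩ := h
  exact ⟨w.u, by simpa using congrArg PR.u hw⟩

instance (p : ℕ) [CharP C p] : CharP (PR C A B) p :=
  ⟨fun n => by rw [natCast_eq, ι_eq_zero, CharP.cast_eq_zero_iff C p n]⟩

/-- Functoriality of the pair ring. -/
def prMap {C' : Type*} [CommRing C'] (φ : C →+* C') :
    PR C A B →+* PR C' (φ A) (φ B) where
  toFun x := ⟨φ x.u, φ x.v⟩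
  map_one' := by ext <;> simp
  map_mul' x y := by ext <;> simp
  map_zero' := by ext <;> simp
  map_add' x y := by ext <;> simp

@[simp] lemma prMap_u {C' : Type*} [CommRing C'] (φ : C →+* C') (x : PR C A B) :
    (prMap φ x).u = φ x.u := rfl
@[simp] lemma prMap_v {C' : Type*} [CommRing C'] (φ : C →+* C') (x : PR C A B) :
    (prMap φ x).v = φ x.v := rfl

lemma prMap_rt {C' : Type*} [CommRing C'] (φ : C →+* C') :
    prMap φ (rt : PR C A B) = rt := by ext <;> simp [rt]
lemma prMap_rt' {C' : Type*} [CommRing C'] (φ : C →+* C') :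
    prMap φ (rt' : PR C A B) = rt' := by ext <;> simp [rt', rt'_u]

/-- `ι (vSeq A B n) = rt^n + rt'^n`. -/
lemma iota_vSeq (n : ℕ) : (ι (vSeq A B n) : PR C A B) = rt ^ n + rt' ^ n := by
  have h := (roots_spec (rt : PR C A B) rt' n).1
  rw [rt_add_rt', rt_mul_rt'] at h
  rw [map_vSeq ι A B n]
  exact h

/-- `(rt - rt') * ι (uSeq A B n) = rt^n - rt'^n`. -/
lemma iota_uSeq (n : ℕ) : ((rt : PR C A B) - rt') * ι (uSeq A B n) = rt ^ n - rt' ^ n := by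
  have h := (roots_spec (rt : PR C A B) rt' n).2
  rw [rt_add_rt', rt_mul_rt'] at h
  rw [map_uSeq ι A B n]
  exact h

end PR

open PR

/-- The fundamental identity `v_n² - Δ u_n² = 4 Bⁿ`. -/
lemma v_sq_sub_u_sq {C : Type*} [CommRing C] (A B : C) (n : ℕ) :
    vSeq A B n ^ 2 - (A ^ 2 - 4 * B) * uSeq A B n ^ 2 = 4 * B ^ n := by
  apply ι_injective (A := A) (B := B)
  have h1 := iota_vSeq (A := A) (B := B) n
  have h2 := iota_uSeq (A := A) (B := B) n
  have h3 := rt_sub_rt'_sq (A := A) (B := B)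
  have h4 : (ι B : PR C A B) ^ n = rt ^ n * rt' ^ n := by
    rw [← rt_mul_rt', mul_pow]
  simp only [map_sub, map_mul, map_pow, map_ofNat]
  linear_combination (ι (vSeq A B n) + rt ^ n + rt' ^ n) * h1 + ι (uSeq A B n) ^ 2 * h3 -
    ((rt - rt') * ι (uSeq A B n) + rt ^ n - rt' ^ n) * h2 - 4 * h4

/-- Composition identity for `v`. -/
lemma vSeq_compose {C : Type*} [CommRing C] (A B : C) (m n : ℕ) :
    vSeq (vSeq A B m) (B ^ m) n = vSeq A B (m * n) := by
  apply ι_injective (A := A) (B := B)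
  have key := (roots_spec ((rt : PR C A B) ^ m) (rt' ^ m) n).1
  have hs : (rt : PR C A B) ^ m + rt' ^ m = ι (vSeq A B m) := (iota_vSeq m).symm
  have hq : (rt : PR C A B) ^ m * rt' ^ m = ι (B ^ m) := by
    rw [← mul_pow, rt_mul_rt', map_pow]
  rw [hs, hq, ← pow_mul, ← pow_mul] at key
  rw [map_vSeq ι (vSeq A B m) (B ^ m) n, key, iota_vSeq]

/-- Composition identity for `u`, weak form (multiplied by the discriminant). -/
lemma uSeq_compose_weak {C : Type*} [CommRing C] (A B : C) (m n : ℕ) :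
    (A ^ 2 - 4 * B) * (uSeq A B m * uSeq (vSeq A B m) (B ^ m) n) =
      (A ^ 2 - 4 * B) * uSeq A B (m * n) := by
  apply ι_injective (A := A) (B := B)
  have key := (roots_spec ((rt : PR C A B) ^ m) (rt' ^ m) n).2
  have hs : (rt : PR C A B) ^ m + rt' ^ m = ι (vSeq A B m) := (iota_vSeq m).symm
  have hq : (rt : PR C A B) ^ m * rt' ^ m = ι (B ^ m) := by
    rw [← mul_pow, rt_mul_rt', map_pow]
  rw [hs, hq, ← pow_mul, ← pow_mul] at key
  have hm := iota_uSeq (A := A) (B := B) m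
  have hmn := iota_uSeq (A := A) (B := B) (m * n)
  have h3 := rt_sub_rt'_sq (A := A) (B := B)
  have hW : (ι (uSeq (vSeq A B m) (B ^ m) n) : PR C A B) =
      uSeq (ι (vSeq A B m)) (ι (B ^ m)) n := map_uSeq ι _ _ n
  simp only [map_sub, map_mul, map_pow, map_ofNat]
  rw [hW]
  linear_combination (ι (uSeq A B (m * n)) -
      uSeq (ι (vSeq A B m)) (ι (B ^ m)) n * ι (uSeq A B m)) * h3 +
    ((rt - rt') * uSeq (ι (vSeq A B m)) (ι (B ^ m)) n) * hm + (rt - rt') * key -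
    (rt - rt') * hmn

end Stmt17Aux

namespace Stmt17Aux

section CharPFacts

variable {C : Type*} [CommRing C] (p : ℕ) [hp : Fact p.Prime] [CharP C p]

open PR in
lemma vSeq_char_p (A B : C) : vSeq A B p = A ^ p := by
  apply ι_injective (A := A) (B := B)
  rw [iota_vSeq, map_pow, ← rt_add_rt', add_pow_char]

open PR in
lemma uSeq_char_p (A B : C) (k : ℕ) (hk : p = 2 * k + 1) :
    (A ^ 2 - 4 * B) * uSeq A B p = (A ^ 2 - 4 * B) ^ (k + 1) := by
  apply ι_injective (A := A) (B := B)
  have h3 : (ι (A ^ 2 - 4 * B) : PR C A B) = ((rt : PR C A B) - rt') ^ 2 := by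
    rw [rt_sub_rt'_sq]
    simp only [map_sub, map_pow, map_mul, map_ofNat]
  have hd : ((rt : PR C A B) - rt') ^ p = rt ^ p - rt' ^ p := sub_pow_char _ _
  calc ι ((A ^ 2 - 4 * B) * uSeq A B p)
      = ι (A ^ 2 - 4 * B) * ι (uSeq A B p) := map_mul _ _ _
    _ = ((rt : PR C A B) - rt') * (((rt : PR C A B) - rt') * ι (uSeq A B p)) := by
        rw [h3]; ring
    _ = ((rt : PR C A B) - rt') * ((rt : PR C A B) ^ p - rt' ^ p) := by rw [iota_uSeq]
    _ = ((rt : PR C A B) - rt') ^ (p + 1) := by rw [← hd, ← pow_succ']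
    _ = (((rt : PR C A B) - rt') ^ 2) ^ (k + 1) := by
        rw [← pow_mul]; congr 1; omega
    _ = ι ((A ^ 2 - 4 * B) ^ (k + 1)) := by rw [← h3, map_pow]

end CharPFacts

section PolyFacts

open MvPolynomial

variable (p : ℕ) [hp : Fact p.Prime]

lemma map_zero_of (D : MvPolynomial (Fin 2) ℤ)
    (h : MvPolynomial.map (Int.castRingHom (ZMod p)) D = 0) : C (p : ℤ) ∣ D := by
  rw [C_dvd_iff_dvd_coeff]
  intro i
  rw [← ZMod.intCast_zmod_eq_zero_iff_dvd]
  show (Int.castRingHom (ZMod p)) (coeff i D) = 0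
  rw [← coeff_map, h, coeff_zero]

lemma v_poly : ∃ G : MvPolynomial (Fin 2) ℤ,
    vSeq (X 0 : MvPolynomial (Fin 2) ℤ) (X 1) p = X 0 ^ p + C (p : ℤ) * G := by
  have hdvd : C (p : ℤ) ∣ vSeq (X 0 : MvPolynomial (Fin 2) ℤ) (X 1) p - X 0 ^ p := by
    apply map_zero_of
    rw [map_sub, map_pow, map_X,
      map_vSeq (MvPolynomial.map (Int.castRingHom (ZMod p))) _ _ p, map_X, map_X,
      vSeq_char_p p, sub_self]
  obtain ⟨G, hG⟩ := hdvd
  exact ⟨G, by rw [← hG]; ring⟩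

lemma u_poly (k : ℕ) (hk : p = 2 * k + 1) : ∃ H : MvPolynomial (Fin 2) ℤ,
    uSeq (X 0 : MvPolynomial (Fin 2) ℤ) (X 1) p = (X 0 ^ 2 - 4 * X 1) ^ k
      + C (p : ℤ) * H := by
  have hne : (X 0 ^ 2 - 4 * X 1 : MvPolynomial (Fin 2) (ZMod p)) ≠ 0 := by
    intro h
    have h0 : (-4 : ZMod p) = 0 := by
      have := congrArg (eval ![(0 : ZMod p), 1]) h
      simpa using this
    have h4 : ((4 : ℕ) : ZMod p) = 0 := by
      have := neg_eq_zero.mp h0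
      push_cast
      exact_mod_cast this
    rw [ZMod.natCast_eq_zero_iff] at h4
    have h2 : p ∣ 2 := hp.out.dvd_of_dvd_pow (show p ∣ 2 ^ 2 by norm_num; exact h4)
    have := (Nat.prime_dvd_prime_iff_eq hp.out Nat.prime_two).mp h2
    omega
  have hchar : (uSeq (X 0 : MvPolynomial (Fin 2) (ZMod p)) (X 1) p) =
      (X 0 ^ 2 - 4 * X 1) ^ k := by
    have h := uSeq_char_p p (X 0 : MvPolynomial (Fin 2) (ZMod p)) (X 1) k hk
    rw [show ((X 0 : MvPolynomial (Fin 2) (ZMod p)) ^ 2 - 4 * X 1) ^ (k + 1)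
      = (X 0 ^ 2 - 4 * X 1) * (X 0 ^ 2 - 4 * X 1) ^ k from pow_succ' _ _] at h
    exact mul_left_cancel₀ hne h
  have hdvd : C (p : ℤ) ∣ uSeq (X 0 : MvPolynomial (Fin 2) ℤ) (X 1) p
      - (X 0 ^ 2 - 4 * X 1) ^ k := by
    apply map_zero_of
    rw [map_sub,
      map_uSeq (MvPolynomial.map (Int.castRingHom (ZMod p))) _ _ p, map_X, map_X, hchar]
    simp [map_pow, map_sub, map_mul, map_ofNat, map_X]
  obtain ⟨H, hH⟩ := hdvd
  exact ⟨H, by rw [← hH]; ring⟩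

end PolyFacts

end Stmt17Aux

namespace Stmt17Aux

section IntLemmas

open MvPolynomial

lemma lucasU_eq (A B : ℤ) : ∀ n, lucasU A B n = uSeq A B n := by
  have key : ∀ n, lucasU A B n = uSeq A B n ∧ lucasU A B (n+1) = uSeq A B (n+1) := by
    intro n
    induction n with
    | zero => exact ⟨rfl, rfl⟩
    | succ n ih => exact ⟨ih.2, by show _ = A * uSeq A B (n+1) - B * uSeq A B n
                                   rw [← ih.1, ← ih.2]; rfl⟩
  exact fun n => (key n).1

lemma lucasV_eq (A B : ℤ) : ∀ n, lucasV A B n = vSeq A B n := by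
  have key : ∀ n, lucasV A B n = vSeq A B n ∧ lucasV A B (n+1) = vSeq A B (n+1) := by
    intro n
    induction n with
    | zero => exact ⟨rfl, rfl⟩
    | succ n ih => exact ⟨ih.2, by show _ = A * vSeq A B (n+1) - B * vSeq A B n
                                   rw [← ih.1, ← ih.2]; rfl⟩
  exact fun n => (key n).1

lemma eval_congr (F : MvPolynomial (Fin 2) ℤ) (v w : Fin 2 → ℤ) (m : ℤ)
    (h : ∀ i, m ∣ v i - w i) : m ∣ eval v F - eval w F := by
  induction F using MvPolynomial.induction_on with
  | C a => simp
  | add f g hf hg =>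
    have : eval v (f + g) - eval w (f + g) = (eval v f - eval w f) + (eval v g - eval w g) := by
      simp only [map_add]; ring
    rw [this]; exact dvd_add hf hg
  | mul_X f i hf =>
    have : eval v (f * X i) - eval w (f * X i) =
        eval v f * (v i - w i) + (eval v f - eval w f) * w i := by
      simp only [map_mul, eval_X]; ring
    rw [this]
    exact dvd_add ((h i).mul_left _) (hf.mul_right _)

variable (p : ℕ) [hp : Fact p.Prime]

lemma fermat_int (b : ℤ) : (p : ℤ) ∣ b ^ p - b := by
  rw [← ZMod.intCast_zmod_eq_zero_iff_dvd]
  push_cast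
  rw [ZMod.pow_card]
  ring

lemma pow_step {j : ℕ} (hj : 1 ≤ j) {a b : ℤ} (h : (p : ℤ) ^ j ∣ a - b) :
    (p : ℤ) ^ (j + 1) ∣ a ^ p - b ^ p := by
  have hab : ((a : ZMod p)) = (b : ZMod p) := by
    have h1 : (p : ℤ) ∣ a - b := dvd_trans (dvd_pow_self _ (by omega : j ≠ 0)) h
    rw [← ZMod.intCast_zmod_eq_zero_iff_dvd] at h1
    push_cast at h1
    linear_combination h1
  have key : (p : ℤ) ∣ ∑ i ∈ Finset.range p, a ^ i * b ^ (p - 1 - i) := by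
    rw [← ZMod.intCast_zmod_eq_zero_iff_dvd]
    push_cast
    calc (∑ i ∈ Finset.range p, (a : ZMod p) ^ i * (b : ZMod p) ^ (p - 1 - i))
        = ∑ i ∈ Finset.range p, (b : ZMod p) ^ (p - 1) := by
          refine Finset.sum_congr rfl (fun i hi => ?_)
          rw [hab, ← pow_add]
          congr 1
          have := Finset.mem_range.mp hi
          omega
      _ = 0 := by simp [Finset.sum_const, ZMod.natCast_self]
  calc (p : ℤ) ^ (j + 1) = (p : ℤ) * (p : ℤ) ^ j := pow_succ' _ _
    _ ∣ (∑ i ∈ Finset.range p, a ^ i * b ^ (p - 1 - i)) * (a - b) := mul_dvd_mul key h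
    _ = a ^ p - b ^ p := geom_sum₂_mul a b p

lemma b_tower (b : ℤ) (j : ℕ) : (p : ℤ) ^ (j + 1) ∣ b ^ p ^ (j + 1) - b ^ p ^ j := by
  have h := dvd_sub_pow_of_dvd_sub (fermat_int p b) j
  rw [← pow_mul] at h
  rw [show p ^ (j + 1) = p * p ^ j from pow_succ' _ _]
  exact h

lemma vSeq_eval (s q : ℤ) (n : ℕ) :
    eval ![s, q] (vSeq (X 0 : MvPolynomial (Fin 2) ℤ) (X 1) n) = vSeq s q n := by
  rw [map_vSeq (eval ![s, q]) _ _ n]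
  simp [eval_X]

lemma uSeq_eval (s q : ℤ) (n : ℕ) :
    eval ![s, q] (uSeq (X 0 : MvPolynomial (Fin 2) ℤ) (X 1) n) = uSeq s q n := by
  rw [map_uSeq (eval ![s, q]) _ _ n]
  simp [eval_X]

/-- The key lifting step for the `v`-part. -/
lemma key_v {j : ℕ} (hj : 1 ≤ j) (s₁ q₁ s₂ q₂ : ℤ) (hs : (p : ℤ) ^ j ∣ s₁ - s₂)
    (hq : (p : ℤ) ^ j ∣ q₁ - q₂) :
    (p : ℤ) ^ (j + 1) ∣ vSeq s₁ q₁ p - vSeq s₂ q₂ p := by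
  obtain ⟨G, hG⟩ := v_poly p
  have e : ∀ s q : ℤ, vSeq s q p = s ^ p + p * eval ![s, q] G := by
    intro s q
    have := congrArg (eval ![s, q]) hG
    rw [vSeq_eval] at this
    simpa using this
  rw [e s₁ q₁, e s₂ q₂]
  have hrw : s₁ ^ p + p * eval ![s₁, q₁] G - (s₂ ^ p + p * eval ![s₂, q₂] G)
      = (s₁ ^ p - s₂ ^ p) + p * (eval ![s₁, q₁] G - eval ![s₂, q₂] G) := by ring
  rw [hrw]
  refine dvd_add (pow_step p hj hs) ?_
  rw [show (p : ℤ) ^ (j + 1) = p * p ^ j from pow_succ' _ _]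
  refine mul_dvd_mul_left _ (eval_congr G _ _ _ (fun i => ?_))
  fin_cases i
  · simpa using hs
  · simpa using hq

end IntLemmas

end Stmt17Aux

namespace Stmt17Aux

section VMain

variable (p : ℕ) [hp : Fact p.Prime] (A B : ℤ)

lemma v_base : (p : ℤ) ∣ vSeq A B p - A := by
  obtain ⟨G, hG⟩ := v_poly p
  have e := congrArg (MvPolynomial.eval ![A, B]) hG
  rw [vSeq_eval] at e
  simp at e
  rw [e]
  have : A ^ p + p * MvPolynomial.eval ![A, B] G - A
      = (A ^ p - A) + p * MvPolynomial.eval ![A, B] G := by ring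
  rw [this]
  exact dvd_add (fermat_int p A) (Dvd.intro _ rfl)

lemma v_main : ∀ a : ℕ, 1 ≤ a →
    (p : ℤ) ^ a ∣ vSeq A B (p ^ a) - vSeq A B (p ^ (a - 1)) := by
  intro a
  induction a with
  | zero => omega
  | succ b ih =>
    intro _
    have hred : b + 1 - 1 = b := rfl
    rw [hred]
    match b, ih with
    | 0, _ => simpa [vSeq] using v_base p A B
    | (c+1), ih =>
      have h1 : vSeq A B (p ^ (c + 2)) = vSeq (vSeq A B (p ^ (c+1))) (B ^ (p ^ (c+1))) p := by
        rw [vSeq_compose, ← pow_succ]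
      have h2 : vSeq A B (p ^ (c + 1)) = vSeq (vSeq A B (p ^ c)) (B ^ (p ^ c)) p := by
        rw [vSeq_compose, ← pow_succ]
      have ihx := ih (by omega)
      have hred2 : c + 1 - 1 = c := rfl
      rw [hred2, h2] at ihx
      rw [h1, h2]
      exact key_v p (by omega) _ _ _ _ ihx (b_tower p B c)
end VMain

end Stmt17Aux

namespace Stmt17Aux

section Frob

open PR

variable (p : ℕ) [hp : Fact p.Prime]

lemma two_ne_zero' (hp2 : p ≠ 2) : (2 : ZMod p) ≠ 0 := by
  intro h
  have h2 : ((2 : ℕ) : ZMod p) = 0 := by exact_mod_cast h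
  rw [ZMod.natCast_eq_zero_iff] at h2
  exact hp2 ((Nat.prime_dvd_prime_iff_eq hp.out Nat.prime_two).mp h2)

lemma frob_formula (A' B' : ZMod p) (k : ℕ) (hk : p = 2 * k + 1) :
    ι (2 : ZMod p) * (rt : PR (ZMod p) A' B') ^ p
      = ι A' + ι ((A' ^ 2 - 4 * B') ^ k) * (rt - rt') ∧
    ι (2 : ZMod p) * (rt' : PR (ZMod p) A' B') ^ p
      = ι A' - ι ((A' ^ 2 - 4 * B') ^ k) * (rt - rt') := by
  have h2rt : ι (2 : ZMod p) * (rt : PR (ZMod p) A' B') = ι A' + (rt - rt') := by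
    ext <;> simp <;> ring
  have h2rt' : ι (2 : ZMod p) * (rt' : PR (ZMod p) A' B') = ι A' - (rt - rt') := by
    ext <;> simp <;> ring
  have hδ2 : ((rt : PR (ZMod p) A' B') - rt') ^ 2 = ι (A' ^ 2 - 4 * B') := by
    rw [rt_sub_rt'_sq]; simp only [map_sub, map_pow, map_mul, map_ofNat]
  have hδp : ((rt : PR (ZMod p) A' B') - rt') ^ p
      = ι ((A' ^ 2 - 4 * B') ^ k) * (rt - rt') := by
    have e := congrArg (fun m => ((rt : PR (ZMod p) A' B') - rt') ^ m) hk
    rw [pow_succ, pow_mul, hδ2, ← map_pow] at e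
    exact e
  constructor
  · calc ι (2 : ZMod p) * (rt : PR (ZMod p) A' B') ^ p
        = ι ((2 : ZMod p) ^ p) * rt ^ p := by rw [ZMod.pow_card]
      _ = (ι (2 : ZMod p) * rt) ^ p := by rw [map_pow, mul_pow]
      _ = (ι A' + ((rt : PR (ZMod p) A' B') - rt')) ^ p := by rw [h2rt]
      _ = (ι A') ^ p + ((rt : PR (ZMod p) A' B') - rt') ^ p := by rw [add_pow_char]
      _ = ι A' + ι ((A' ^ 2 - 4 * B') ^ k) * (rt - rt') := by
          rw [hδp, ← map_pow, ZMod.pow_card]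
  · calc ι (2 : ZMod p) * (rt' : PR (ZMod p) A' B') ^ p
        = ι ((2 : ZMod p) ^ p) * rt' ^ p := by rw [ZMod.pow_card]
      _ = (ι (2 : ZMod p) * rt') ^ p := by rw [map_pow, mul_pow]
      _ = (ι A' - ((rt : PR (ZMod p) A' B') - rt')) ^ p := by rw [h2rt']
      _ = (ι A') ^ p - ((rt : PR (ZMod p) A' B') - rt') ^ p := by rw [sub_pow_char]
      _ = ι A' - ι ((A' ^ 2 - 4 * B') ^ k) * (rt - rt') := by
          rw [hδp, ← map_pow, ZMod.pow_card]

variable (A B Δ : ℤ)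

/-- Reduction map to the pair ring over `ZMod p`. -/
noncomputable def ψ : PR ℤ A B →+* PR (ZMod p) ((Int.castRingHom (ZMod p)) A)
    ((Int.castRingHom (ZMod p)) B) := prMap (Int.castRingHom (ZMod p))

lemma dvd_of_psi_zero (ξ : PR ℤ A B) (h : ψ p A B ξ = 0) : ((p : ℕ) : PR ℤ A B) ∣ ξ := by
  have hu : (p : ℤ) ∣ ξ.u := by
    rw [← ZMod.intCast_zmod_eq_zero_iff_dvd]
    exact congrArg PR.u h
  have hv : (p : ℤ) ∣ ξ.v := by
    rw [← ZMod.intCast_zmod_eq_zero_iff_dvd]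
    exact congrArg PR.v h
  obtain ⟨c, hc⟩ := hu
  obtain ⟨d, hd⟩ := hv
  refine ⟨⟨c, d⟩, ?_⟩
  rw [natCast_eq]
  ext <;> simp [hc, hd]

/-- The mod-`p` Frobenius facts, packaged as divisibilities over `ℤ`. -/
lemma frob_facts (hp2 : p ≠ 2) (hΔ : Δ = A ^ 2 - 4 * B) :
    (legendreSym p Δ = 1 →
      ((p : ℕ) : PR ℤ A B) ∣ rt ^ p - rt ∧ ((p : ℕ) : PR ℤ A B) ∣ rt' ^ p - rt') ∧
    (legendreSym p Δ = -1 →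
      ((p : ℕ) : PR ℤ A B) ∣ rt ^ p - rt' ∧ ((p : ℕ) : PR ℤ A B) ∣ rt' ^ p - rt) := by
  obtain ⟨k, hk⟩ := hp.out.odd_of_ne_two hp2
  set A' : ZMod p := (Int.castRingHom (ZMod p)) A with hA'
  set B' : ZMod p := (Int.castRingHom (ZMod p)) B with hB'
  have hD : ((Δ : ℤ) : ZMod p) = A' ^ 2 - 4 * B' := by
    rw [hΔ, hA', hB']; simp only [Int.coe_castRingHom]; push_cast; ring
  have heuler : ((legendreSym p Δ : ℤ) : ZMod p) = (A' ^ 2 - 4 * B') ^ k := by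
    rw [legendreSym.eq_pow, hD]
    congr 1
    omega
  have hu2 : IsUnit (ι (2 : ZMod p) : PR (ZMod p) A' B') :=
    (isUnit_iff_ne_zero.mpr (two_ne_zero' p hp2)).map ι
  have hff := frob_formula p A' B' k hk
  have hψrt : ∀ m : ℕ, ψ p A B (rt ^ m - rt) = rt ^ m - rt := by
    intro m; rw [map_sub, map_pow, ψ, prMap_rt]
  constructor
  · intro hleg
    have hcoef : ((A' ^ 2 - 4 * B') ^ k : ZMod p) = 1 := by
      rw [← heuler, hleg]; norm_num
    have h1 : (rt : PR (ZMod p) A' B') ^ p = rt := by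
      apply hu2.mul_left_cancel
      rw [hff.1, hcoef]
      rw [show (ι (1 : ZMod p) : PR (ZMod p) A' B') = 1 from map_one ι, one_mul,
        ← (show ι (2 : ZMod p) * (rt : PR (ZMod p) A' B') = ι A' + (rt - rt') by
          ext <;> simp <;> ring)]
    have h2 : (rt' : PR (ZMod p) A' B') ^ p = rt' := by
      apply hu2.mul_left_cancel
      rw [hff.2, hcoef]
      rw [show (ι (1 : ZMod p) : PR (ZMod p) A' B') = 1 from map_one ι, one_mul,
        ← (show ι (2 : ZMod p) * (rt' : PR (ZMod p) A' B') = ι A' - (rt - rt') by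
          ext <;> simp <;> ring)]
    constructor
    · apply dvd_of_psi_zero
      rw [map_sub, map_pow, ψ, prMap_rt, h1, sub_self]
    · apply dvd_of_psi_zero
      rw [map_sub, map_pow, ψ, prMap_rt', h2, sub_self]
  · intro hleg
    have hcoef : ((A' ^ 2 - 4 * B') ^ k : ZMod p) = -1 := by
      rw [← heuler, hleg]; norm_num
    have h1 : (rt : PR (ZMod p) A' B') ^ p = rt' := by
      apply hu2.mul_left_cancel
      rw [hff.1, hcoef]
      rw [show (ι (-1 : ZMod p) : PR (ZMod p) A' B') = -1 by rw [map_neg, map_one]]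
      rw [show ι A' + -1 * ((rt : PR (ZMod p) A' B') - rt') = ι A' - (rt - rt') by ring,
        ← (show ι (2 : ZMod p) * (rt' : PR (ZMod p) A' B') = ι A' - (rt - rt') by
          ext <;> simp <;> ring)]
    have h2 : (rt' : PR (ZMod p) A' B') ^ p = rt := by
      apply hu2.mul_left_cancel
      rw [hff.2, hcoef]
      rw [show (ι (-1 : ZMod p) : PR (ZMod p) A' B') = -1 by rw [map_neg, map_one]]
      rw [show ι A' - -1 * ((rt : PR (ZMod p) A' B') - rt') = ι A' + (rt - rt') by ring,
        ← (show ι (2 : ZMod p) * (rt : PR (ZMod p) A' B') = ι A' + (rt - rt') by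
          ext <;> simp <;> ring)]
    constructor
    · apply dvd_of_psi_zero
      rw [map_sub, map_pow, ψ, prMap_rt, prMap_rt', h1]
      exact sub_self _
    · apply dvd_of_psi_zero
      rw [map_sub, map_pow, ψ, prMap_rt, prMap_rt', h2]
      exact sub_self _

end Frob

end Stmt17Aux

namespace Stmt17Aux

open PR

section UPart

variable {C : Type*} [CommRing C]

lemma delta_sq (A B : C) : ((rt : PR C A B) - rt') ^ 2 = ι (A ^ 2 - 4 * B) := by
  rw [rt_sub_rt'_sq]; simp only [map_sub, map_pow, map_mul, map_ofNat]

lemma u_deg (c : ℤ) : ∀ n : ℕ, uSeq (2 * c) (c ^ 2) (n + 1) = (n + 1) * c ^ n := by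
  have key : ∀ n : ℕ, uSeq (2 * c) (c ^ 2) (n + 1) = (n + 1) * c ^ n ∧
      uSeq (2 * c) (c ^ 2) (n + 2) = (n + 2) * c ^ (n + 1) := by
    intro n
    induction n with
    | zero => constructor <;> (show (_ : ℤ) = _) <;> simp [uSeq] <;> ring
    | succ n ih =>
      refine ⟨ih.2, ?_⟩
      show 2 * c * uSeq (2 * c) (c ^ 2) (n + 2) - c ^ 2 * uSeq (2 * c) (c ^ 2) (n + 1) = _
      rw [ih.1, ih.2]
      push_cast
      ring
  exact fun n => (key n).1

lemma u_comp (A B : ℤ) (hΔne : A ^ 2 - 4 * B ≠ 0) (m n : ℕ) :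
    uSeq A B (m * n) = uSeq A B m * uSeq (vSeq A B m) (B ^ m) n :=
  (mul_left_cancel₀ hΔne (uSeq_compose_weak A B m n)).symm

variable (p : ℕ) [hp : Fact p.Prime]

lemma u_val_dvd (k : ℕ) (hk : p = 2 * k + 1) (s q : ℤ) (h : (p : ℤ) ∣ s ^ 2 - 4 * q) :
    (p : ℤ) ∣ uSeq s q p := by
  obtain ⟨H, hH⟩ := u_poly p k hk
  have e := congrArg (MvPolynomial.eval ![s, q]) hH
  rw [uSeq_eval] at e
  simp only [map_add, map_mul, map_pow, map_sub, MvPolynomial.eval_C,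
    MvPolynomial.eval_X, map_ofNat] at e
  rw [e]
  have hk1 : k ≠ 0 := by have := hp.out.two_le; omega
  refine dvd_add (dvd_pow ?_ hk1) ⟨_, rfl⟩
  simpa using h

lemma u_ram (A B : ℤ) (hpΔ : (p : ℤ) ∣ A ^ 2 - 4 * B) (hne : A ^ 2 - 4 * B ≠ 0)
    (hp2 : p ≠ 2) : ∀ a : ℕ, (p : ℤ) ^ a ∣ uSeq A B (p ^ a) := by
  obtain ⟨k, hk⟩ := hp.out.odd_of_ne_two hp2
  intro a
  induction a with
  | zero => simp [uSeq]
  | succ a ih =>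
    have hcomp : uSeq A B (p ^ (a + 1))
        = uSeq A B (p ^ a) * uSeq (vSeq A B (p ^ a)) (B ^ (p ^ a)) p := by
      rw [← u_comp A B hne (p ^ a) p, ← pow_succ]
    have hdc : (p : ℤ) ∣ vSeq A B (p ^ a) ^ 2 - 4 * B ^ p ^ a := by
      rw [show vSeq A B (p ^ a) ^ 2 - 4 * B ^ p ^ a
        = (A ^ 2 - 4 * B) * uSeq A B (p ^ a) ^ 2 by
          linarith [v_sq_sub_u_sq A B (p ^ a)]]
      exact hpΔ.mul_right _
    have hval := u_val_dvd p k hk _ _ hdc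
    rw [hcomp, pow_succ]
    exact mul_dvd_mul ih hval

variable (A B Δ : ℤ)

lemma u_unram_one (hp2 : p ≠ 2) (hΔ : Δ = A ^ 2 - 4 * B) (hleg : legendreSym p Δ = 1)
    (b : ℕ) : (p : ℤ) ^ (b + 1) ∣ Δ * (uSeq A B (p ^ (b + 1)) - uSeq A B (p ^ b)) := by
  obtain ⟨h1, h2⟩ := (frob_facts p A B Δ hp2 hΔ).1 hleg
  have l1 := dvd_sub_pow_of_dvd_sub h1 b
  have l2 := dvd_sub_pow_of_dvd_sub h2 b
  rw [← pow_mul, ← pow_succ'] at l1 l2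
  have comb := dvd_sub l1 l2
  have hrw : (rt : PR ℤ A B) ^ p ^ (b + 1) - rt ^ p ^ b
      - ((rt' : PR ℤ A B) ^ p ^ (b + 1) - rt' ^ p ^ b)
      = (rt - rt') * ι (uSeq A B (p ^ (b + 1))) - (rt - rt') * ι (uSeq A B (p ^ b)) := by
    rw [iota_uSeq, iota_uSeq]; ring
  rw [hrw] at comb
  have comb2 := comb.mul_left ((rt : PR ℤ A B) - rt')
  have hrw2 : ((rt : PR ℤ A B) - rt')
      * ((rt - rt') * ι (uSeq A B (p ^ (b + 1))) - (rt - rt') * ι (uSeq A B (p ^ b)))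
      = ι (Δ * (uSeq A B (p ^ (b + 1)) - uSeq A B (p ^ b))) := by
    have := delta_sq A B
    rw [map_mul, map_sub, hΔ, ← this]
    ring
  rw [hrw2] at comb2
  have hcast : (((p : ℕ) : PR ℤ A B)) ^ (b + 1) = ι ((p : ℤ) ^ (b + 1)) := by
    rw [natCast_eq, ← map_pow]
  rw [hcast] at comb2
  exact ι_dvd_ι comb2

lemma u_unram_neg (hp2 : p ≠ 2) (hΔ : Δ = A ^ 2 - 4 * B) (hleg : legendreSym p Δ = -1)
    (b : ℕ) : (p : ℤ) ^ (b + 1) ∣ Δ * (uSeq A B (p ^ (b + 1)) + uSeq A B (p ^ b)) := by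
  obtain ⟨h1, h2⟩ := (frob_facts p A B Δ hp2 hΔ).2 hleg
  have l1 := dvd_sub_pow_of_dvd_sub h1 b
  have l2 := dvd_sub_pow_of_dvd_sub h2 b
  rw [← pow_mul, ← pow_succ'] at l1 l2
  have comb := dvd_sub l1 l2
  have hrw : (rt : PR ℤ A B) ^ p ^ (b + 1) - rt' ^ p ^ b
      - ((rt' : PR ℤ A B) ^ p ^ (b + 1) - rt ^ p ^ b)
      = (rt - rt') * ι (uSeq A B (p ^ (b + 1))) + (rt - rt') * ι (uSeq A B (p ^ b)) := by
    rw [iota_uSeq, iota_uSeq]; ring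
  rw [hrw] at comb
  have comb2 := comb.mul_left ((rt : PR ℤ A B) - rt')
  have hrw2 : ((rt : PR ℤ A B) - rt')
      * ((rt - rt') * ι (uSeq A B (p ^ (b + 1))) + (rt - rt') * ι (uSeq A B (p ^ b)))
      = ι (Δ * (uSeq A B (p ^ (b + 1)) + uSeq A B (p ^ b))) := by
    have := delta_sq A B
    rw [map_mul, map_add, hΔ, ← this]
    ring
  rw [hrw2] at comb2
  have hcast : (((p : ℕ) : PR ℤ A B)) ^ (b + 1) = ι ((p : ℤ) ^ (b + 1)) := by
    rw [natCast_eq, ← map_pow]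
  rw [hcast] at comb2
  exact ι_dvd_ι comb2

lemma coprime_pow_delta (hnd : ¬ (p : ℤ) ∣ Δ) (a : ℕ) : IsCoprime ((p : ℤ) ^ a) Δ := by
  refine IsCoprime.pow_left ?_
  rw [Int.isCoprime_iff_gcd_eq_one]
  by_contra h
  have hd : Int.gcd (p : ℤ) Δ ∣ p := by
    have h1 : ((Int.gcd (p : ℤ) Δ : ℕ) : ℤ) ∣ (p : ℤ) := Int.gcd_dvd_left _ _
    exact_mod_cast h1
  rcases (Nat.dvd_prime hp.out).mp hd with h1 | h1
  · exact h h1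
  · apply hnd
    have h2 : ((Int.gcd (p : ℤ) Δ : ℕ) : ℤ) ∣ Δ := Int.gcd_dvd_right _ _
    rw [h1] at h2
    exact_mod_cast h2

end UPart

end Stmt17Aux


open Stmt17Aux in
theorem stmt17 (p : ℕ) (hp : p.Prime) (a : ℕ) (ha : 0 < a) (A B : ℤ)
    (Δ : ℤ) (hΔ : Δ = A ^ 2 - 4 * B) :
    lucasV A B (p ^ a) ≡ lucasV A B (p ^ (a - 1)) [ZMOD (p : ℤ) ^ a] ∧
    (p ≠ 2 →
      lucasU A B (p ^ a) ≡ jacobiSym Δ p * lucasU A B (p ^ (a - 1)) [ZMOD (p : ℤ) ^ a]) := by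
  haveI : Fact p.Prime := ⟨hp⟩
  obtain ⟨b, rfl⟩ : ∃ b, a = b + 1 := ⟨a - 1, by omega⟩
  have hred : b + 1 - 1 = b := rfl
  rw [hred]
  constructor
  · rw [lucasV_eq, lucasV_eq]
    exact (Int.ModEq.symm (Int.modEq_iff_dvd.mpr (v_main p A B (b + 1) (by omega))))
  · intro hp2
    rw [lucasU_eq, lucasU_eq, ← jacobiSym.legendreSym.to_jacobiSym]
    suffices hdvd : (p : ℤ) ^ (b + 1) ∣ uSeq A B (p ^ (b + 1))
        - legendreSym p Δ * uSeq A B (p ^ b) by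
      have h2 : (p : ℤ) ^ (b + 1) ∣ legendreSym p Δ * uSeq A B (p ^ b)
          - uSeq A B (p ^ (b + 1)) := by
        simpa [neg_sub] using (dvd_neg.mpr hdvd)
      exact Int.modEq_iff_dvd.mpr h2
    by_cases hdvdΔ : (p : ℤ) ∣ Δ
    · have hleg0 : legendreSym p Δ = 0 := by
        apply (legendreSym.eq_zero_iff p Δ).mpr
        rwa [ZMod.intCast_zmod_eq_zero_iff_dvd]
      rw [hleg0, zero_mul, sub_zero]
      by_cases hΔ0 : Δ = 0
      · have hA2 : A ^ 2 = 4 * B := by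
          have := hΔ0 ▸ hΔ
          linarith
        have heven : Even A := by
          have h2 : Even (A ^ 2) := by rw [hA2]; exact ⟨2 * B, by ring⟩
          exact (Int.even_pow.mp h2).1
        obtain ⟨c, hc⟩ := heven
        have hA : A = 2 * c := by linarith
        have hB : B = c ^ 2 := by
          have h4 : (2 * c) ^ 2 = 4 * B := by rw [← hA]; exact hA2
          ring_nf at h4
          linarith
        subst hA hB
        obtain ⟨n, hn⟩ : ∃ n, p ^ (b + 1) = n + 1 :=
          ⟨p ^ (b + 1) - 1, by have := Nat.one_le_pow (b + 1) p hp.pos; omega⟩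
        rw [hn, u_deg c n]
        have hcast : ((n : ℤ) + 1) = ((p : ℤ)) ^ (b + 1) := by
          have : ((n + 1 : ℕ) : ℤ) = ((p ^ (b + 1) : ℕ) : ℤ) := by rw [hn]
          push_cast at this
          linarith
        rw [hcast]
        exact Dvd.intro _ rfl
      · exact u_ram p A B (hΔ ▸ hdvdΔ) (fun h => hΔ0 (by rw [hΔ, h])) hp2 (b + 1)
    · have hne0 : ((Δ : ℤ) : ZMod p) ≠ 0 := fun h =>
        hdvdΔ ((ZMod.intCast_zmod_eq_zero_iff_dvd _ _).mp h)
      have hcop := coprime_pow_delta p Δ hdvdΔ (b + 1)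
      rcases legendreSym.eq_one_or_neg_one p hne0 with h1 | h1
      · rw [h1, one_mul]
        exact hcop.dvd_of_dvd_mul_left (u_unram_one p A B Δ hp2 hΔ h1 b)
      · rw [h1]
        have h2 := hcop.dvd_of_dvd_mul_left (u_unram_neg p A B Δ hp2 hΔ h1 b)
        rw [show uSeq A B (p ^ (b + 1)) - (-1) * uSeq A B (p ^ b)
          = uSeq A B (p ^ (b + 1)) + uSeq A B (p ^ b) by ring]
        exact h2
end
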